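/- arXiv:2604.25024 — 7 statements merged into one kernel-verified Lean document; each statement's English description precedes it below -/
import Mathlib

section
/- Let γ : [0,ℓ] → ℝⁿ be a C¹ unit-speed curve, let t ∈ (0,ℓ) be a point at which γ′ is differentiable, and set κ := ‖γ″(t)‖. Then ‖γ(t+h) − γ(t−h)‖ = 2h − (κ²/3)h³ + o(h³) as h → 0⁺; equivalently, (‖γ(t+h) − γ(t−h)‖ − 2h)/h³ → −κ²/3 as h → 0⁺. (Euclidean case of the paper's chord-length expansion, Lemma 4.4.) -/
set_option maxHeartbeats 1000000

open Set Filter MeasureTheory intervalIntegral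
open scoped InnerProductSpace

private lemma inner_intervalIntegral' {n : ℕ} {f : ℝ → EuclideanSpace ℝ (Fin n)} {a b : ℝ}
    (hab : a ≤ b) (hf : IntervalIntegrable f volume a b) (c : EuclideanSpace ℝ (Fin n)) :
    ⟪c, ∫ s in a..b, f s⟫_ℝ = ∫ s in a..b, ⟪c, f s⟫_ℝ := by
  rw [integral_of_le hab, integral_of_le hab]
  exact (integral_inner hf.1 c).symm

/-- **Chord-length expansion (Euclidean case of Lemma 4.4).**
If `γ` is a `C¹` unit-speed curve and `γ'` is differentiable at `t ∈ (0, ℓ)` with second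
derivative `γ''` and `κ = ‖γ''‖`, then
`‖γ(t+h) − γ(t−h)‖ = 2h − (κ²/3) h³ + o(h³)` as `h → 0⁺`. -/
theorem chord_length_expansion
    (n : ℕ) (ℓ : ℝ)
    (γ γ' : ℝ → EuclideanSpace ℝ (Fin n))
    (hd : ∀ s ∈ Icc (0:ℝ) ℓ, HasDerivWithinAt γ (γ' s) (Icc 0 ℓ) s)
    (hu : ∀ s ∈ Icc (0:ℝ) ℓ, ‖γ' s‖ = 1)
    (hc : ContinuousOn γ' (Icc 0 ℓ))
    (t : ℝ) (ht : t ∈ Ioo (0:ℝ) ℓ)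
    (γ'' : EuclideanSpace ℝ (Fin n))
    (hdd : HasDerivWithinAt γ' γ'' (Icc 0 ℓ) t) :
    Tendsto (fun h : ℝ => (‖γ (t + h) - γ (t - h)‖ - 2 * h) / h ^ 3)
      (nhdsWithin 0 (Ioi 0)) (nhds (-(‖γ''‖ ^ 2) / 3)) := by
  obtain ⟨ht0, htℓ⟩ := ht
  set T : EuclideanSpace ℝ (Fin n) := γ' t with hT
  set κ : ℝ := ‖γ''‖ with hκ
  have hTnorm : ‖T‖ = 1 := hu t ⟨ht0.le, htℓ.le⟩
  have hγ''at : HasDerivAt γ' γ'' t := hdd.hasDerivAt (Icc_mem_nhds ht0 htℓ)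
  set δ : ℝ := min t (ℓ - t) with hδ
  have hδpos : 0 < δ := lt_min ht0 (sub_pos.mpr htℓ)
  set F : ℝ → EuclideanSpace ℝ (Fin n) := fun h => γ (t + h) - γ (t - h) with hF
  set I : ℝ → ℝ := fun h => ∫ s in t - h..t + h, ‖γ' s - T‖ ^ 2 with hI
  set E : ℝ → EuclideanSpace ℝ (Fin n) := fun h => F h - (2 * h) • T with hE
  set ρ : ℝ → EuclideanSpace ℝ (Fin n) := fun s => γ' s - T - (s - t) • γ'' with hρ
  -- membership eventuality
  have hmem : ∀ᶠ h in nhdsWithin (0:ℝ) (Ioi 0), 0 < h ∧ h < δ := by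
    filter_upwards [self_mem_nhdsWithin,
      eventually_nhdsWithin_of_eventually_nhds (gt_mem_nhds hδpos)] with h h1 h2
    exact ⟨h1, h2⟩
  -- key structural facts for small positive h
  have hkey : ∀ᶠ h in nhdsWithin (0:ℝ) (Ioi 0),
      (E h = ∫ s in t - h..t + h, ρ s) ∧
      (‖F h‖ ^ 2 = 4 * h ^ 2 - 2 * h * I h + ‖E h‖ ^ 2) := by
    filter_upwards [hmem] with h ⟨h0, hδh⟩
    obtain ⟨hh1, hh2⟩ := lt_min_iff.mp (hδ ▸ hδh)
    have hab : t - h ≤ t + h := by linarith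
    have hsub : Icc (t - h) (t + h) ⊆ Icc 0 ℓ := Icc_subset_Icc (by linarith) (by linarith)
    have hcγ' : ContinuousOn γ' (uIcc (t - h) (t + h)) := by
      rw [uIcc_of_le hab]; exact hc.mono hsub
    have int_γ' : IntervalIntegrable γ' volume (t - h) (t + h) := hcγ'.intervalIntegrable
    -- FTC
    have hFTC : (∫ s in t - h..t + h, γ' s) = γ (t + h) - γ (t - h) := by
      refine intervalIntegral.integral_eq_sub_of_hasDerivAt (fun x hx => ?_) int_γ'
      rw [uIcc_of_le hab] at hx
      have hx0 : 0 < x := by have := hx.1; linarith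
      have hxℓ : x < ℓ := by have := hx.2; linarith
      exact (hd x (hsub hx)).hasDerivAt (Icc_mem_nhds hx0 hxℓ)
    have hFh : F h = ∫ s in t - h..t + h, γ' s := by rw [hF, hFTC]
    -- integrability of various pieces
    have int_sub : IntervalIntegrable (fun s => γ' s - T) volume (t - h) (t + h) :=
      (hcγ'.sub continuousOn_const).intervalIntegrable
    have int_smul : IntervalIntegrable (fun s => (s - t) • γ'') volume (t - h) (t + h) :=
      (Continuous.intervalIntegrable (by continuity) _ _)
    have int_normsq : IntervalIntegrable (fun s => ‖γ' s - T‖ ^ 2) volume (t - h) (t + h) :=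
      ((hcγ'.sub continuousOn_const).norm.pow 2).intervalIntegrable
    have h2h : t + h - (t - h) = 2 * h := by ring
    have hlin : (∫ s in t - h..t + h, (s - t)) = 0 := by
      rw [intervalIntegral.integral_sub intervalIntegral.intervalIntegrable_id
        intervalIntegrable_const, integral_id, intervalIntegral.integral_const]
      simp only [smul_eq_mul]
      ring
    have hEh : E h = F h - (2 * h) • T := congrFun hE h
    have hEeq : E h = ∫ s in t - h..t + h, ρ s := by
      calc E h = (∫ s in t - h..t + h, γ' s) - (2 * h) • T := by rw [hEh, hFh]
        _ = ∫ s in t - h..t + h, (γ' s - T) := by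
            rw [intervalIntegral.integral_sub int_γ' intervalIntegrable_const,
              intervalIntegral.integral_const, h2h]
        _ = ∫ s in t - h..t + h, ρ s := by
            rw [hρ]
            rw [intervalIntegral.integral_sub int_sub int_smul,
              intervalIntegral.integral_smul_const, hlin, zero_smul, sub_zero]
    -- inner products
    have hTF : ⟪T, F h⟫_ℝ = 2 * h - I h / 2 := by
      rw [hFh, inner_intervalIntegral' hab int_γ' T]
      have hcongr : (∫ s in t - h..t + h, ⟪T, γ' s⟫_ℝ)
          = ∫ s in t - h..t + h, (1 - ‖γ' s - T‖ ^ 2 / 2) := by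
        refine intervalIntegral.integral_congr (fun s hs => ?_)
        rw [uIcc_of_le hab] at hs
        have hs1 : ‖γ' s‖ = 1 := hu s (hsub hs)
        have hns := norm_sub_sq_real (γ' s) T
        rw [hs1, hTnorm] at hns
        rw [real_inner_comm]
        linarith
      rw [hcongr, intervalIntegral.integral_sub intervalIntegrable_const
        (int_normsq.div_const 2), intervalIntegral.integral_const, h2h,
        intervalIntegral.integral_div, hI]
      simp
    -- the identity
    have hFdecomp : F h = (2 * h) • T + E h := by rw [hEh]; abel
    have hsq := norm_add_sq_real ((2 * h) • T) (E h)
    rw [← hFdecomp] at hsq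
    have hnsm : ‖(2 * h) • T‖ ^ 2 = 4 * h ^ 2 := by
      rw [norm_smul, Real.norm_eq_abs, hTnorm, abs_of_pos (by linarith)]
      ring
    have hin1 : ⟪(2 * h) • T, E h⟫_ℝ = 2 * h * ⟪T, E h⟫_ℝ := real_inner_smul_left _ _ _
    have hin2 : ⟪T, E h⟫_ℝ = ⟪T, F h⟫_ℝ - 2 * h * ⟪T, T⟫_ℝ := by
      rw [hEh]
      rw [inner_sub_right, real_inner_smul_right]
    have hTT : ⟪T, T⟫_ℝ = 1 := by rw [real_inner_self_eq_norm_sq, hTnorm]; norm_num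
    refine ⟨hEeq, ?_⟩
    rw [hsq, hnsm, hin1, hin2, hTT, hTF]
    ring
  -- little-o estimate
  have hrkey : ∀ ε > (0:ℝ), ∀ᶠ h in nhdsWithin (0:ℝ) (Ioi 0),
      ∀ s ∈ Icc (t - h) (t + h), ‖ρ s‖ ≤ ε * h := by
    intro ε hε
    have hlo := hasDerivAt_iff_isLittleO.mp hγ''at
    have h1 := hlo.def hε
    rw [Metric.eventually_nhds_iff] at h1
    obtain ⟨δ', hδ'pos, hδ'⟩ := h1
    filter_upwards [hmem,
      eventually_nhdsWithin_of_eventually_nhds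
        (gt_mem_nhds (half_pos hδ'pos))] with h ⟨h0, _⟩ hhδ' s hs
    have habs : |s - t| ≤ h := abs_le.mpr ⟨by linarith [hs.1], by linarith [hs.2]⟩
    have hds : dist s t < δ' := by rw [Real.dist_eq]; linarith
    have h2 := hδ' hds
    have h3 : ‖ρ s‖ ≤ ε * ‖s - t‖ := by simpa [hρ, hT] using h2
    calc ‖ρ s‖ ≤ ε * ‖s - t‖ := h3
      _ ≤ ε * h := by rw [Real.norm_eq_abs]; exact mul_le_mul_of_nonneg_left habs hε.le
  -- bound on E
  have hEbound : ∀ ε > (0:ℝ), ∀ᶠ h in nhdsWithin (0:ℝ) (Ioi 0), ‖E h‖ ≤ ε * h ^ 2 := by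
    intro ε hε
    filter_upwards [hmem, hkey, hrkey (ε / 2) (by positivity)] with h ⟨h0, _⟩ ⟨hEeq, _⟩ hrb
    rw [hEeq]
    have hab : t - h ≤ t + h := by linarith
    have hb := intervalIntegral.norm_integral_le_of_norm_le_const
      (C := ε / 2 * h) (f := ρ) (a := t - h) (b := t + h) ?_
    · have habs2 : |t + h - (t - h)| = 2 * h := by rw [abs_of_pos (by linarith)]; ring
      rw [habs2] at hb
      nlinarith
    · intro x hx
      exact hrb x (Ioc_subset_Icc_self (by rwa [uIoc_of_le hab] at hx))
  -- bound on I
  have hIbound : ∀ ε > (0:ℝ), ∀ᶠ h in nhdsWithin (0:ℝ) (Ioi 0),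
      |I h - 2 * h ^ 3 / 3 * κ ^ 2| ≤ ε * h ^ 3 := by
    intro ε hε
    have hκ0 : (0:ℝ) ≤ κ := hκ ▸ norm_nonneg _
    set ε' : ℝ := min 1 (ε / (2 * (2 * κ + 1))) with hε'def
    have hε'pos : 0 < ε' := lt_min one_pos (by positivity)
    filter_upwards [hmem, hrkey ε' hε'pos] with h ⟨h0, hδh⟩ hrb
    have hab : t - h ≤ t + h := by linarith
    obtain ⟨hh1, hh2⟩ := lt_min_iff.mp (hδ ▸ hδh)
    have hsub : Icc (t - h) (t + h) ⊆ Icc 0 ℓ := Icc_subset_Icc (by linarith) (by linarith)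
    have hcγ' : ContinuousOn γ' (Icc (t - h) (t + h)) := hc.mono hsub
    have hpt : ∀ s ∈ Icc (t - h) (t + h),
        |‖γ' s - T‖ ^ 2 - (s - t) ^ 2 * κ ^ 2| ≤ (2 * κ + 1) * ε' * h ^ 2 := by
      intro s hs
      have habs : |s - t| ≤ h := abs_le.mpr ⟨by linarith [hs.1], by linarith [hs.2]⟩
      have hρb : ‖ρ s‖ ≤ ε' * h := hrb s hs
      have hdecomp : γ' s - T = (s - t) • γ'' + ρ s := by rw [hρ]; exact (add_sub_cancel _ _).symm
      have hna : ‖(s - t) • γ''‖ = |s - t| * κ := by rw [norm_smul, Real.norm_eq_abs, hκ]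
      have hsq := norm_add_sq_real ((s - t) • γ'') (ρ s)
      rw [← hdecomp] at hsq
      have h1 : ‖(s - t) • γ''‖ ^ 2 = (s - t) ^ 2 * κ ^ 2 := by rw [hna, mul_pow, sq_abs]
      have hε'1 : ε' ≤ 1 := min_le_left _ _
      have hρ0 : (0:ℝ) ≤ ‖ρ s‖ := norm_nonneg _
      have hin : |⟪(s - t) • γ'', ρ s⟫_ℝ| ≤ (|s - t| * κ) * (ε' * h) := by
        refine le_trans (abs_real_inner_le_norm _ _) ?_
        rw [hna]
        exact mul_le_mul le_rfl hρb hρ0 (by positivity)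
      have hin2 : (|s - t| * κ) * (ε' * h) ≤ κ * ε' * h ^ 2 := by
        nlinarith [mul_le_mul_of_nonneg_right habs (by positivity : (0:ℝ) ≤ κ * (ε' * h))]
      have hnb : ‖ρ s‖ ^ 2 ≤ ε' * h ^ 2 := by
        have hq : ‖ρ s‖ ^ 2 ≤ (ε' * h) ^ 2 := pow_le_pow_left₀ hρ0 hρb 2
        nlinarith [mul_nonneg (mul_nonneg hε'pos.le (sub_nonneg.mpr hε'1)) (sq_nonneg h)]
      obtain ⟨hinl, hinr⟩ := abs_le.mp hin
      have hinr' : ⟪(s - t) • γ'', ρ s⟫_ℝ ≤ κ * ε' * h ^ 2 := le_trans hinr hin2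
      have hinl' : -(κ * ε' * h ^ 2) ≤ ⟪(s - t) • γ'', ρ s⟫_ℝ := by linarith
      have hpos2 : (0:ℝ) ≤ ε' * h ^ 2 := by positivity
      have hρsq : (0:ℝ) ≤ ‖ρ s‖ ^ 2 := sq_nonneg _
      rw [abs_sub_le_iff]
      constructor <;> linarith
    have int1 : IntervalIntegrable (fun s => ‖γ' s - T‖ ^ 2) volume (t - h) (t + h) := by
      apply ContinuousOn.intervalIntegrable
      rw [uIcc_of_le hab]
      exact (hcγ'.sub continuousOn_const).norm.pow 2
    have int2 : IntervalIntegrable (fun s => (s - t) ^ 2 * κ ^ 2) volume (t - h) (t + h) :=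
      Continuous.intervalIntegrable
        (((continuous_id.sub continuous_const).pow 2).mul continuous_const) _ _
    have hint2 : (∫ s in t - h..t + h, (s - t) ^ 2 * κ ^ 2) = 2 * h ^ 3 / 3 * κ ^ 2 := by
      rw [intervalIntegral.integral_mul_const]
      have hcomp : (∫ s in t - h..t + h, (s - t) ^ 2) = ∫ x in (t - h) - t..(t + h) - t, x ^ 2 :=
        (intervalIntegral.integral_comp_sub_right (fun x => x ^ 2) t)
      rw [hcomp, show t - h - t = -h by ring, show t + h - t = h by ring, integral_pow]
      ring
    have hdiff : I h - 2 * h ^ 3 / 3 * κ ^ 2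
        = ∫ s in t - h..t + h, (‖γ' s - T‖ ^ 2 - (s - t) ^ 2 * κ ^ 2) := by
      rw [intervalIntegral.integral_sub int1 int2, hint2, hI]
    rw [hdiff]
    have hb := intervalIntegral.norm_integral_le_of_norm_le_const
      (C := (2 * κ + 1) * ε' * h ^ 2) (f := fun s => ‖γ' s - T‖ ^ 2 - (s - t) ^ 2 * κ ^ 2)
      (a := t - h) (b := t + h) ?_
    · rw [Real.norm_eq_abs] at hb
      have hε'2 : ε' ≤ ε / (2 * (2 * κ + 1)) := min_le_right _ _
      rw [le_div_iff₀ (by positivity)] at hε'2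
      have habs2 : |t + h - (t - h)| = 2 * h := by rw [abs_of_pos (by linarith)]; ring
      rw [habs2] at hb
      nlinarith [mul_le_mul_of_nonneg_right hε'2 (pow_pos h0 3).le, hb]
    · intro x hx
      have hx' : x ∈ Icc (t - h) (t + h) :=
        Ioc_subset_Icc_self (by rwa [uIoc_of_le hab] at hx)
      rw [Real.norm_eq_abs]
      exact hpt x hx'
  -- limits
  have limE : Tendsto (fun h => ‖E h‖ / h ^ 2) (nhdsWithin (0:ℝ) (Ioi 0)) (nhds 0) := by
    rw [Metric.tendsto_nhds]
    intro ε hε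
    filter_upwards [hmem, hEbound (ε / 2) (by positivity)] with h ⟨h0, _⟩ hb
    rw [Real.dist_eq, sub_zero, abs_of_nonneg (by positivity), div_lt_iff₀ (by positivity)]
    nlinarith [pow_pos h0 2]
  have limI : Tendsto (fun h => I h / h ^ 3) (nhdsWithin (0:ℝ) (Ioi 0))
      (nhds (2 / 3 * κ ^ 2)) := by
    rw [Metric.tendsto_nhds]
    intro ε hε
    filter_upwards [hmem, hIbound (ε / 2) (by positivity)] with h ⟨h0, _⟩ hb
    have h3 : (0:ℝ) < h ^ 3 := by positivity
    rw [Real.dist_eq, show I h / h ^ 3 - 2 / 3 * κ ^ 2 = (I h - 2 * h ^ 3 / 3 * κ ^ 2) / h ^ 3 by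
      field_simp, abs_div, abs_of_pos h3, div_lt_iff₀ h3]
    nlinarith
  have limFsq : Tendsto (fun h => 4 - 2 * (I h / h ^ 3) * h ^ 2 + (‖E h‖ / h ^ 2) ^ 2 * h ^ 2)
      (nhdsWithin (0:ℝ) (Ioi 0)) (nhds 4) := by
    have hid0 : Tendsto (fun h : ℝ => h) (nhdsWithin (0:ℝ) (Ioi 0)) (nhds 0) :=
      tendsto_id.mono_left nhdsWithin_le_nhds
    have h4 := ((tendsto_const_nhds (x := (4:ℝ)) (f := nhdsWithin (0:ℝ) (Ioi 0))).sub
      ((limI.const_mul 2).mul (hid0.pow 2))).add ((limE.pow 2).mul (hid0.pow 2))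
    convert h4 using 2 <;> ring_nf
  have limF : Tendsto (fun h => ‖F h‖ / h) (nhdsWithin (0:ℝ) (Ioi 0)) (nhds 2) := by
    have hsq : Tendsto (fun h => Real.sqrt (4 - 2 * (I h / h ^ 3) * h ^ 2
        + (‖E h‖ / h ^ 2) ^ 2 * h ^ 2)) (nhdsWithin (0:ℝ) (Ioi 0)) (nhds 2) := by
      have h5 := (Real.continuous_sqrt.tendsto 4).comp limFsq
      rwa [show Real.sqrt 4 = 2 by
        rw [show (4:ℝ) = 2 ^ 2 by norm_num, Real.sqrt_sq (by norm_num)]] at h5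
    refine hsq.congr' ?_
    filter_upwards [hmem, hkey] with h ⟨h0, _⟩ ⟨_, hid⟩
    have h2 : (h:ℝ) ≠ 0 := h0.ne'
    have heq : 4 - 2 * (I h / h ^ 3) * h ^ 2 + (‖E h‖ / h ^ 2) ^ 2 * h ^ 2 = (‖F h‖ / h) ^ 2 := by
      rw [div_pow ‖F h‖, hid]
      field_simp
    rw [heq, Real.sqrt_sq (by positivity)]
  -- final combination
  have lim2 : Tendsto (fun h => (-2 * (I h / h ^ 3) + (‖E h‖ / h ^ 2) ^ 2) / (‖F h‖ / h + 2))
      (nhdsWithin (0:ℝ) (Ioi 0)) (nhds (-(κ ^ 2) / 3)) := by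
    have hcomb := ((limI.const_mul (-2)).add (limE.pow 2)).div (limF.add_const 2) (by norm_num)
    convert hcomb using 2
    · rfl
    · ring
  refine lim2.congr' ?_
  filter_upwards [hmem, hkey] with h ⟨h0, hδh⟩ ⟨hEeq, hid⟩
  have hFpos : 0 < ‖F h‖ + 2 * h := by
    have := norm_nonneg (F h); linarith
  have hsub : ‖F h‖ - 2 * h = (-2 * h * I h + ‖E h‖ ^ 2) / (‖F h‖ + 2 * h) := by
    rw [eq_div_iff hFpos.ne']
    nlinarith [hid]
  show (-2 * (I h / h ^ 3) + (‖E h‖ / h ^ 2) ^ 2) / (‖F h‖ / h + 2) = (‖F h‖ - 2 * h) / h ^ 3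
  rw [hsub]
  have h3 : h ^ 3 ≠ 0 := by positivity
  field_simp
end

section
/- Let γ : [0,ℓ] → ℝⁿ be a unit-speed curve whose derivative γ′ is L-Lipschitz. Then for every t ∈ (0,ℓ) and every h > 0 with t − h ≥ 0 and t + h ≤ ℓ, one has ‖γ(t+h) − γ(t−h)‖ ≥ 2h − (L²/3)h³. (Euclidean case of the paper's uniform chord-length estimate, Lemma 4.5.) -/
open Set

/-- **Uniform chord-length estimate (Euclidean case of Lemma 4.5).**
If `γ` is a unit-speed curve whose derivative is `L`-Lipschitz, then
`‖γ(t+h) − γ(t−h)‖ ≥ 2h − (L²/3) h³` whenever `[t−h, t+h] ⊆ [0, ℓ]`. -/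
theorem uniform_chord_length_estimate
    (n : ℕ) (ℓ : ℝ) (L : NNReal)
    (γ γ' : ℝ → EuclideanSpace ℝ (Fin n))
    (hd : ∀ s ∈ Icc (0:ℝ) ℓ, HasDerivWithinAt γ (γ' s) (Icc 0 ℓ) s)
    (hu : ∀ s ∈ Icc (0:ℝ) ℓ, ‖γ' s‖ = 1)
    (hlip : LipschitzOnWith L γ' (Icc 0 ℓ)) :
    ∀ t ∈ Ioo (0:ℝ) ℓ, ∀ h : ℝ, 0 < h → 0 ≤ t - h → t + h ≤ ℓ →
      2 * h - ((L : ℝ) ^ 2 / 3) * h ^ 3 ≤ ‖γ (t + h) - γ (t - h)‖ := by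
  intro t ht h hh h1 h2
  have htI : t ∈ Icc (0:ℝ) ℓ := ⟨ht.1.le, ht.2.le⟩
  set v : EuclideanSpace ℝ (Fin n) := γ' t with hv
  set F : ℝ → ℝ := fun s => inner ℝ v (γ s) - (s - t) + (L : ℝ) ^ 2 * (s - t) ^ 3 / 6 with hF
  have hFd : ∀ s ∈ Icc (0:ℝ) ℓ,
      HasDerivWithinAt F ((inner ℝ v (γ' s) : ℝ) - 1 + (L : ℝ) ^ 2 * (s - t) ^ 2 / 2)
        (Icc 0 ℓ) s := by
    intro s hs
    have h1 : HasDerivWithinAt (fun s => (inner ℝ v (γ s) : ℝ))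
        ((inner ℝ v (γ' s) : ℝ) + (inner ℝ (0 : EuclideanSpace ℝ (Fin n)) (γ s) : ℝ))
        (Icc 0 ℓ) s :=
      (hasDerivWithinAt_const s _ v).inner ℝ (hd s hs)
    have h2 : HasDerivWithinAt (fun s : ℝ => s - t) 1 (Icc (0:ℝ) ℓ) s :=
      (hasDerivWithinAt_id s _).sub_const t
    have h3 : HasDerivWithinAt (fun s : ℝ => (L : ℝ) ^ 2 * (s - t) ^ 3 / 6)
        ((L : ℝ) ^ 2 * (3 * (s - t) ^ 2 * 1) / 6) (Icc (0:ℝ) ℓ) s := by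
      exact (((h2.pow 3)).const_mul ((L : ℝ) ^ 2)).div_const 6
    have := (h1.sub h2).add h3
    convert this using 1
    rfl
    rfl
    rfl
    simp
    ring
  have hmono : MonotoneOn F (Icc 0 ℓ) := by
    apply monotoneOn_of_hasDerivWithinAt_nonneg (convex_Icc 0 ℓ)
      (f' := fun s => (inner ℝ v (γ' s) : ℝ) - 1 + (L : ℝ) ^ 2 * (s - t) ^ 2 / 2)
    · intro s hs
      exact (hFd s hs).continuousWithinAt
    · intro x hx
      exact (hFd x (interior_subset hx)).mono interior_subset
    · intro x hx
      rw [interior_Icc] at hx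
      have hxI : x ∈ Icc (0:ℝ) ℓ := ⟨hx.1.le, hx.2.le⟩
      have hnorm : ‖γ' x - v‖ ≤ (L : ℝ) * |x - t| := by
        have := hlip.norm_sub_le hxI htI
        simpa [Real.dist_eq, dist_eq_norm] using this
      have hsq : ‖γ' x - v‖ ^ 2 ≤ (L : ℝ) ^ 2 * (x - t) ^ 2 := by
        have h0 : (0:ℝ) ≤ ‖γ' x - v‖ := norm_nonneg _
        calc ‖γ' x - v‖ ^ 2 ≤ ((L : ℝ) * |x - t|) ^ 2 := by
              exact pow_le_pow_left₀ h0 hnorm 2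
          _ = (L : ℝ) ^ 2 * (x - t) ^ 2 := by rw [mul_pow, sq_abs]
      have hinner : (inner ℝ v (γ' x) : ℝ) = 1 - ‖γ' x - v‖ ^ 2 / 2 := by
        have hexp : ‖γ' x - v‖ ^ 2 = ‖γ' x‖ ^ 2 - 2 * (inner ℝ (γ' x) v : ℝ) + ‖v‖ ^ 2 :=
          norm_sub_sq_real (γ' x) v
        rw [hu x hxI, hu t htI] at hexp
        rw [real_inner_comm]
        linarith
      rw [hinner]
      linarith
  have hkey := hmono (show t - h ∈ Icc (0:ℝ) ℓ from ⟨h1, by linarith⟩)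
    (show t + h ∈ Icc (0:ℝ) ℓ from ⟨by linarith, h2⟩) (by linarith)
  have hFval : (inner ℝ v (γ (t + h) - γ (t - h)) : ℝ) ≥ 2 * h - (L : ℝ) ^ 2 / 3 * h ^ 3 := by
    rw [inner_sub_right]
    simp only [hF] at hkey
    have e1 : (t + h - t) = h := by ring
    have e2 : (t - h - t) = -h := by ring
    rw [e1, e2] at hkey
    nlinarith [hkey]
  calc 2 * h - (L : ℝ) ^ 2 / 3 * h ^ 3 ≤ (inner ℝ v (γ (t + h) - γ (t - h)) : ℝ) := hFval
    _ ≤ ‖v‖ * ‖γ (t + h) - γ (t - h)‖ := real_inner_le_norm _ _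
    _ = ‖γ (t + h) - γ (t - h)‖ := by rw [hu t htI, one_mul]
end

section
/- Let ℓ > 0, let γ : [0,ℓ] → ℝⁿ be a unit-speed curve whose derivative γ′ is L-Lipschitz, and let γ̃ : [0,ℓ] → ℝ² be a chord-convex curve parametrized by arclength which majorizes γ. Then γ̃ is differentiable at every point of [0,ℓ] and there exists K ≥ 0 such that γ̃′ is K-Lipschitz; in particular γ̃ is C^{1,1}. (Regularity part of the paper's Lemma 4.6, Euclidean case.) -/
open Set Filter
open scoped RealInnerProductSpace

section Aux
variable {E : Type*} [NormedAddCommGroup E] [InnerProductSpace ℝ E]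

lemma quot_close {a b : E} {p q e : ℝ} (hp : 0 < p) (hq : 0 < q) (he : 0 ≤ e)
    (ha : ‖a‖ ≤ p) (hb : ‖b‖ ≤ q) (hab : p + q - e ≤ ‖a + b‖) :
    ‖p⁻¹ • a - q⁻¹ • b‖^2 ≤ 2*(p+q)*e/(p*q) := by
  have hna : 0 ≤ ‖a‖ := norm_nonneg a
  have hnb : 0 ≤ ‖b‖ := norm_nonneg b
  have hip : p*q - (p+q)*e ≤ ⟪a,b⟫ := by
    have habs : |⟪a,b⟫| ≤ ‖a‖ * ‖b‖ := abs_real_inner_le_norm a b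
    have hsq : ‖a + b‖^2 = ‖a‖^2 + 2*⟪a,b⟫ + ‖b‖^2 := norm_add_sq_real a b
    rcases le_or_gt e (p+q) with h | h
    · have h2 : (p+q-e)^2 ≤ ‖a+b‖^2 := by
        apply sq_le_sq' <;> nlinarith [norm_nonneg (a+b)]
      nlinarith
    · nlinarith [abs_le.mp habs]
  have h1 : ‖p⁻¹ • a - q⁻¹ • b‖^2
      = p⁻¹^2*‖a‖^2 - 2*(p⁻¹*q⁻¹)*⟪a,b⟫ + q⁻¹^2*‖b‖^2 := by
    rw [@norm_sub_sq_real, norm_smul, norm_smul, real_inner_smul_left, real_inner_smul_right]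
    rw [Real.norm_eq_abs, Real.norm_eq_abs, abs_of_pos (inv_pos.mpr hp), abs_of_pos (inv_pos.mpr hq)]
    ring
  rw [h1, div_eq_mul_inv, mul_inv]
  have hp' : 0 < p⁻¹ := inv_pos.mpr hp
  have hq' : 0 < q⁻¹ := inv_pos.mpr hq
  have e1 : p * p⁻¹ = 1 := mul_inv_cancel₀ hp.ne'
  have e2 : q * q⁻¹ = 1 := mul_inv_cancel₀ hq.ne'
  have hA : p⁻¹ * ‖a‖ ≤ 1 := by
    calc p⁻¹ * ‖a‖ ≤ p⁻¹ * p := by nlinarith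
    _ = 1 := by field_simp
  have hB : q⁻¹ * ‖b‖ ≤ 1 := by
    calc q⁻¹ * ‖b‖ ≤ q⁻¹ * q := by nlinarith
    _ = 1 := by field_simp
  have hA2 : p⁻¹^2 * ‖a‖^2 ≤ 1 := by nlinarith [mul_nonneg hp'.le hna]
  have hB2 : q⁻¹^2 * ‖b‖^2 ≤ 1 := by nlinarith [mul_nonneg hq'.le hnb]
  have hkey : 2 - 2*(p+q)*e*(p⁻¹*q⁻¹) ≤ 2*(p⁻¹*q⁻¹)*⟪a,b⟫ := by
    have := mul_le_mul_of_nonneg_left hip (by positivity : (0:ℝ) ≤ 2*(p⁻¹*q⁻¹))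
    calc 2 - 2*(p+q)*e*(p⁻¹*q⁻¹) = 2*(p⁻¹*q⁻¹) * (p*q - (p+q)*e) := by
          field_simp
      _ ≤ _ := this
  linarith

lemma twoscale (f : ℝ → E) (ℓ C : ℝ) (hC : 0 ≤ C)
    (Hlow : ∀ s t : ℝ, 0 ≤ s → s ≤ t → t ≤ ℓ → (t-s) - C*(t-s)^3 ≤ ‖f t - f s‖)
    (Hup : ∀ s t : ℝ, 0 ≤ s → s ≤ t → t ≤ ℓ → ‖f t - f s‖ ≤ t - s)
    (t h h' : ℝ) (ht : 0 ≤ t) (h0 : 0 < h') (h1 : h' ≤ h) (h2 : h ≤ 2*h')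
    (h3 : t + h ≤ ℓ) :
    ‖h'⁻¹ • (f (t+h') - f t) - h⁻¹ • (f (t+h) - f t)‖ ≤ Real.sqrt (2*C) * h := by
  have hh : 0 < h := lt_of_lt_of_le h0 h1
  rcases eq_or_lt_of_le h1 with rfl | hlt
  · simp [sub_self]
    positivity
  · have hne : h ≠ 0 := hh.ne'
    have hne' : h' ≠ 0 := h0.ne'
    have hne2 : h - h' ≠ 0 := by intro hx; apply absurd (by linarith : h' = h) hlt.ne
    set a := f (t+h') - f t with hadef
    set b := f (t+h) - f (t+h') with hbdef
    have ha : ‖a‖ ≤ h' := by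
      have := Hup t (t+h') ht (by linarith) (by linarith)
      simpa using this
    have hb : ‖b‖ ≤ h - h' := by
      have := Hup (t+h') (t+h) (by linarith) (by linarith) h3
      simpa using this
    have hab : h' + (h - h') - C*h^3 ≤ ‖a + b‖ := by
      have := Hlow t (t+h) ht (by linarith) h3
      have hab2 : a + b = f (t+h) - f t := by rw [hadef, hbdef]; abel
      rw [hab2]
      calc h' + (h - h') - C*h^3 = (t+h-t) - C*(t+h-t)^3 := by ring_nf
        _ ≤ _ := this
    have hq := quot_close h0 (by linarith : (0:ℝ) < h - h') (by positivity : (0:ℝ) ≤ C*h^3)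
      ha hb hab
    have hid : h'⁻¹ • (f (t+h') - f t) - h⁻¹ • (f (t+h) - f t)
        = ((h-h')/h) • (h'⁻¹ • a - (h-h')⁻¹ • b) := by
      rw [show f (t+h) - f t = a + b by rw [hadef, hbdef]; abel]
      match_scalars <;> (field_simp; try ring)
    rw [hid, norm_smul, Real.norm_eq_abs, abs_of_pos (div_pos (by linarith) hh)]
    have hsq : (((h-h')/h) * ‖h'⁻¹ • a - (h-h')⁻¹ • b‖)^2 ≤ 2*C*h^2 := by
      have hnn : (0:ℝ) ≤ ‖h'⁻¹ • a - (h-h')⁻¹ • b‖^2 := by positivity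
      have key : (((h-h')/h))^2 * (2*(h' + (h-h'))*(C*h^3)/(h'*(h-h')))
          ≤ 2*C*h^2 := by
        have e1 : (((h-h')/h))^2 * (2*(h' + (h-h'))*(C*h^3)/(h'*(h-h')))
            = 2*C*h^2 * ((h-h')/h') := by
          field_simp
          ring
        rw [e1]
        have : (h-h')/h' ≤ 1 := by
          rw [div_le_one h0]; linarith
        nlinarith [mul_le_mul_of_nonneg_left this (by positivity : (0:ℝ) ≤ 2*C*h^2)]
      calc (((h-h')/h) * ‖h'⁻¹ • a - (h-h')⁻¹ • b‖)^2
          = (((h-h')/h))^2 * ‖h'⁻¹ • a - (h-h')⁻¹ • b‖^2 := by ring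
        _ ≤ (((h-h')/h))^2 * (2*(h' + (h-h'))*(C*h^3)/(h'*(h-h'))) := by
            apply mul_le_mul_of_nonneg_left hq (by positivity)
        _ ≤ 2*C*h^2 := key
    have : ((h-h')/h) * ‖h'⁻¹ • a - (h-h')⁻¹ • b‖ ≤ Real.sqrt (2*C*h^2) := by
      rw [show (2:ℝ)*C*h^2 = 2*C*h^2 by ring]
      exact (Real.le_sqrt (mul_nonneg (div_nonneg (by linarith) hh.le) (norm_nonneg _))
        (by positivity)).mpr hsq
    calc ((h-h')/h) * ‖h'⁻¹ • a - (h-h')⁻¹ • b‖ ≤ Real.sqrt (2*C*h^2) := this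
      _ = Real.sqrt (2*C) * h := by
          rw [show (2:ℝ)*C*h^2 = (2*C)*h^2 by ring, Real.sqrt_mul (by positivity),
            Real.sqrt_sq hh.le]

lemma dyadic (f : ℝ → E) (ℓ C : ℝ) (hC : 0 ≤ C)
    (Hlow : ∀ s t : ℝ, 0 ≤ s → s ≤ t → t ≤ ℓ → (t-s) - C*(t-s)^3 ≤ ‖f t - f s‖)
    (Hup : ∀ s t : ℝ, 0 ≤ s → s ≤ t → t ≤ ℓ → ‖f t - f s‖ ≤ t - s) (k : ℕ) :
    ∀ t h h' : ℝ, 0 ≤ t → 0 < h' → h / 2^k ≤ h' → h' ≤ h → t + h ≤ ℓ →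
    ‖h'⁻¹ • (f (t+h') - f t) - h⁻¹ • (f (t+h) - f t)‖ ≤ 2 * Real.sqrt (2*C) * h := by
  induction k with
  | zero =>
    intro t h h' ht h0 hk h1 h3
    have he : h' = h := le_antisymm h1 (by simpa using hk)
    subst he
    simp only [sub_self, norm_zero]
    have : 0 < h' := h0
    positivity
  | succ k ih =>
    intro t h h' ht h0 hk h1 h3
    have hh : 0 < h := lt_of_lt_of_le h0 h1
    by_cases hc : h ≤ 2*h'
    · have h4 := twoscale f ℓ C hC Hlow Hup t h h' ht h0 h1 hc h3
      have hB : 0 ≤ Real.sqrt (2*C) * h := by positivity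
      linarith
    · push_neg at hc
      have ih2 := ih t (h/2) h' ht h0
        (by rw [show h/2/2^k = h/2^(k+1) by rw [pow_succ]; ring]; exact hk)
        (by linarith) (by linarith)
      have step := twoscale f ℓ C hC Hlow Hup t h (h/2) ht (by linarith) (by linarith)
        (by linarith) h3
      calc ‖h'⁻¹ • (f (t+h') - f t) - h⁻¹ • (f (t+h) - f t)‖
          ≤ ‖h'⁻¹ • (f (t+h') - f t) - (h/2)⁻¹ • (f (t+h/2) - f t)‖
            + ‖(h/2)⁻¹ • (f (t+h/2) - f t) - h⁻¹ • (f (t+h) - f t)‖ := by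
            have : h'⁻¹ • (f (t+h') - f t) - h⁻¹ • (f (t+h) - f t)
              = (h'⁻¹ • (f (t+h') - f t) - (h/2)⁻¹ • (f (t+h/2) - f t))
                + ((h/2)⁻¹ • (f (t+h/2) - f t) - h⁻¹ • (f (t+h) - f t)) := by abel
            rw [this]; exact norm_add_le _ _
        _ ≤ 2 * Real.sqrt (2*C) * (h/2) + Real.sqrt (2*C) * h := add_le_add ih2 step
        _ = 2 * Real.sqrt (2*C) * h := by ring

lemma claimA (f : ℝ → E) (ℓ C : ℝ) (hC : 0 ≤ C)
    (Hlow : ∀ s t : ℝ, 0 ≤ s → s ≤ t → t ≤ ℓ → (t-s) - C*(t-s)^3 ≤ ‖f t - f s‖)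
    (Hup : ∀ s t : ℝ, 0 ≤ s → s ≤ t → t ≤ ℓ → ‖f t - f s‖ ≤ t - s)
    (t h h' : ℝ) (ht : 0 ≤ t) (h0 : 0 < h') (h1 : h' ≤ h) (h3 : t + h ≤ ℓ) :
    ‖h'⁻¹ • (f (t+h') - f t) - h⁻¹ • (f (t+h) - f t)‖ ≤ 2 * Real.sqrt (2*C) * h := by
  have hh : 0 < h := lt_of_lt_of_le h0 h1
  obtain ⟨k, hk⟩ := pow_unbounded_of_one_lt (h/h') (one_lt_two (α := ℝ))
  exact dyadic f ℓ C hC Hlow Hup k t h h' ht h0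
    (by rw [div_le_iff₀ (by positivity)]; rw [div_lt_iff₀ h0] at hk; nlinarith) h1 h3

lemma forward_deriv [CompleteSpace E] (f : ℝ → E) (ℓ C : ℝ) (hC : 0 ≤ C)
    (Hlow : ∀ s t : ℝ, 0 ≤ s → s ≤ t → t ≤ ℓ → (t-s) - C*(t-s)^3 ≤ ‖f t - f s‖)
    (Hup : ∀ s t : ℝ, 0 ≤ s → s ≤ t → t ≤ ℓ → ‖f t - f s‖ ≤ t - s) :
    ∃ g : ℝ → E, ∀ t h : ℝ, 0 ≤ t → 0 < h → t + h ≤ ℓ →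
      ‖h⁻¹ • (f (t+h) - f t) - g t‖ ≤ 2 * Real.sqrt (2*C) * h := by
  have key : ∀ t : ℝ, ∃ y : E, ∀ h : ℝ, 0 ≤ t → 0 < h → t + h ≤ ℓ →
      ‖h⁻¹ • (f (t+h) - f t) - y‖ ≤ 2 * Real.sqrt (2*C) * h := by
    intro t
    by_cases ht : 0 ≤ t ∧ t < ℓ
    · obtain ⟨ht0, htl⟩ := ht
      set m := ℓ - t with hm
      have hm0 : 0 < m := by simp [hm]; linarith
      set w : ℕ → E := fun k => (m/2^k)⁻¹ • (f (t + m/2^k) - f t) with hw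
      have hcauchy : CauchySeq w := by
        apply cauchySeq_of_le_geometric (1/2 : ℝ) (2 * Real.sqrt (2*C) * m * 2) (by norm_num)
        intro k
        rw [dist_eq_norm, hw]
        have hk1 : (0:ℝ) < m/2^(k+1) := by positivity
        have hk2 : m/2^(k+1) ≤ m/2^k := by
          apply div_le_div_of_nonneg_left hm0.le (by positivity)
          exact pow_le_pow_right₀ (by norm_num) (Nat.le_succ k)
        have h3 : t + m/2^k ≤ ℓ := by
          have : m/2^k ≤ m := by
            apply div_le_self hm0.le
            exact one_le_pow₀ (by norm_num : (1:ℝ) ≤ 2)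
          linarith [this]
        have := claimA f ℓ C hC Hlow Hup t (m/2^k) (m/2^(k+1)) ht0 hk1 hk2 h3
        have hrw : ‖w k - w (k+1)‖ = ‖(m/2^(k+1))⁻¹ • (f (t + m/2^(k+1)) - f t)
            - (m/2^k)⁻¹ • (f (t + m/2^k) - f t)‖ := by
          rw [hw, norm_sub_rev]
        rw [← hw, hrw]
        calc _ ≤ 2 * Real.sqrt (2*C) * (m/2^k) := this
          _ = 2 * Real.sqrt (2*C) * m * 2 * (1/2)^(k+1) := by
              rw [div_eq_mul_inv, ← inv_pow]; ring
          _ ≤ 2 * Real.sqrt (2*C) * m * 2 * (1/2)^k := by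
              apply mul_le_mul_of_nonneg_left _ (by positivity)
              apply pow_le_pow_of_le_one (by norm_num) (by norm_num) (Nat.le_succ k)
      obtain ⟨y, hy⟩ := cauchySeq_tendsto_of_complete hcauchy
      refine ⟨y, fun h _ h0 h3 => ?_⟩
      have htend : Tendsto (fun k => ‖h⁻¹ • (f (t+h) - f t) - w k‖) atTop
          (nhds ‖h⁻¹ • (f (t+h) - f t) - y‖) :=
        (tendsto_const_nhds.sub hy).norm
      apply le_of_tendsto htend
      have hsmall : ∀ᶠ k in atTop, m/2^k ≤ h := by
        have h2 : Tendsto (fun k : ℕ => ((1:ℝ)/2)^k) atTop (nhds 0) :=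
          tendsto_pow_atTop_nhds_zero_of_lt_one (by norm_num) (by norm_num)
        have h4 : Tendsto (fun k : ℕ => m/2^k) atTop (nhds 0) := by
          have := h2.const_mul m
          rw [mul_zero] at this
          refine this.congr (fun k => ?_)
          rw [div_pow, one_pow, mul_one_div]
        exact (h4.eventually_lt_const h0).mono (fun k hk => hk.le)
      filter_upwards [hsmall] with k hk
      have hk1 : (0:ℝ) < m/2^k := by positivity
      have := claimA f ℓ C hC Hlow Hup t h (m/2^k) ht0 hk1 hk (by linarith)
      rw [norm_sub_rev] at this
      exact this
    · refine ⟨0, fun h h0 hh h3 => absurd ?_ ht⟩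
      exact ⟨h0, by linarith⟩
  choose g hg using key
  exact ⟨g, fun t h ht h0 h3 => hg t h ht h0 h3⟩

end Aux

lemma chord_low {n : ℕ} {ℓ : ℝ} {L : NNReal} {γ γ' : ℝ → EuclideanSpace ℝ (Fin n)}
    (hd : ∀ t ∈ Icc (0:ℝ) ℓ, HasDerivWithinAt γ (γ' t) (Icc 0 ℓ) t)
    (hu : ∀ t ∈ Icc (0:ℝ) ℓ, ‖γ' t‖ = 1)
    (hlip : LipschitzOnWith L γ' (Icc 0 ℓ)) :
    ∀ s t : ℝ, 0 ≤ s → s ≤ t → t ≤ ℓ →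
      (t-s) - ((L:ℝ)^2/6)*(t-s)^3 ≤ ‖γ t - γ s‖ := by
  intro s t hs hst htl
  have hsI : s ∈ Icc (0:ℝ) ℓ := ⟨hs, le_trans hst htl⟩
  have htI : t ∈ Icc (0:ℝ) ℓ := ⟨le_trans hs hst, htl⟩
  set C6 : ℝ := (L:ℝ)^2/6 with hC6
  set v : EuclideanSpace ℝ (Fin n) := γ' s with hv
  have hsub : Icc s t ⊆ Icc (0:ℝ) ℓ := Icc_subset_Icc hs htl
  set F : ℝ → ℝ := fun u => ⟪γ u, v⟫ - ((u - s) - C6*(u-s)^3) with hF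
  set F' : ℝ → ℝ := fun u => ⟪γ' u, v⟫ - (1 - C6*(3*(u-s)^2)) with hF'
  have hderiv : ∀ u ∈ Icc s t, HasDerivWithinAt F (F' u) (Icc s t) u := by
    intro u hu'
    have h1 : HasDerivWithinAt γ (γ' u) (Icc s t) u := ((hd u (hsub hu')).mono hsub)
    have h2 : HasDerivWithinAt (fun u => ⟪γ u, v⟫) (⟪γ' u, v⟫) (Icc s t) u := by
      have := h1.inner ℝ (hasDerivWithinAt_const u (Icc s t) v)
      simpa using this
    have h3 : HasDerivAt (fun u : ℝ => (u - s) - C6*(u-s)^3)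
        (1 - C6*(3*(u-s)^2)) u := by
      have hid : HasDerivAt (fun u : ℝ => u - s) 1 u := (hasDerivAt_id u).sub_const s
      have hcube : HasDerivAt (fun u : ℝ => (u-s)^3) (3*(u-s)^2) u := by
        have := hid.fun_pow 3
        simpa using this
      simpa using hid.fun_sub (hcube.const_mul C6)
    exact h2.sub h3.hasDerivWithinAt
  have hmono : MonotoneOn F (Icc s t) := by
    apply monotoneOn_of_hasDerivWithinAt_nonneg (convex_Icc s t)
      (fun u hu' => (hderiv u hu').continuousWithinAt)
      (fun u hu' => (hderiv u (interior_subset hu')).mono interior_subset)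
    intro u hu'
    have huI : u ∈ Icc s t := interior_subset hu'
    have huI' : u ∈ Icc (0:ℝ) ℓ := hsub huI
    have hips : ‖γ' u - v‖^2 = 2 - 2*⟪γ' u, v⟫ := by
      rw [@norm_sub_sq_real, hu u huI', hv, hu s hsI]
      ring
    have hlips : ‖γ' u - v‖ ≤ (L:ℝ) * (u - s) := by
      have := hlip.dist_le_mul u huI' s hsI
      rw [dist_eq_norm] at this
      rw [Real.dist_eq, abs_of_nonneg (by linarith [huI.1] : (0:ℝ) ≤ u - s)] at this
      exact this
    have hnn : (0:ℝ) ≤ ‖γ' u - v‖ := norm_nonneg _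
    have hsq : ‖γ' u - v‖^2 ≤ (L:ℝ)^2 * (u-s)^2 := by nlinarith
    rw [hF']
    simp only
    rw [hC6]
    nlinarith
  have hFle : F s ≤ F t := hmono (left_mem_Icc.mpr hst) (right_mem_Icc.mpr hst) hst
  have hinner : (t-s) - C6*(t-s)^3 ≤ ⟪γ t - γ s, v⟫ := by
    rw [inner_sub_left]
    have : F s = ⟪γ s, v⟫ := by rw [hF]; simp
    rw [hF] at hFle
    simp only at hFle
    linarith [hFle]
  have hcs : ⟪γ t - γ s, v⟫ ≤ ‖γ t - γ s‖ := by
    have := real_inner_le_norm (γ t - γ s) v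
    rw [hv, hu s hsI] at this
    simpa using this
  linarith

/-- **`C^{1,1}` regularity of chord-convex majorizers (Lemma 4.6, regularity part,
Euclidean case).** If `γ` is a unit-speed curve in `ℝⁿ` with `L`-Lipschitz derivative
and `σ` is a chord-convex planar curve parametrized by arclength which majorizes `γ`,
then `σ` is differentiable everywhere on `[0, ℓ]` with Lipschitz derivative. -/
theorem chordConvex_majorizer_C11
    (n : ℕ) (ℓ : ℝ) (hℓ : 0 < ℓ) (L : NNReal)
    (γ γ' : ℝ → EuclideanSpace ℝ (Fin n))
    (σ : ℝ → EuclideanSpace ℝ (Fin 2))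
    -- `γ` is a unit-speed curve with `L`-Lipschitz derivative
    (hd : ∀ t ∈ Icc (0:ℝ) ℓ, HasDerivWithinAt γ (γ' t) (Icc 0 ℓ) t)
    (hu : ∀ t ∈ Icc (0:ℝ) ℓ, ‖γ' t‖ = 1)
    (hlip : LipschitzOnWith L γ' (Icc 0 ℓ))
    -- `σ` is chord-convex
    (hinj : InjOn σ (Ico 0 ℓ))
    (hcc : σ '' Icc 0 ℓ ∪ segment ℝ (σ ℓ) (σ 0)
      = frontier (convexHull ℝ (σ '' Icc 0 ℓ)))
    -- `σ` is parametrized by arclength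
    (hσlip : LipschitzOnWith 1 σ (Icc 0 ℓ))
    (hlen : eVariationOn σ (Icc 0 ℓ) = ENNReal.ofReal ℓ)
    -- `σ` majorizes `γ`
    (hmaj : ∀ s ∈ Icc (0:ℝ) ℓ, ∀ t ∈ Icc (0:ℝ) ℓ, ‖γ s - γ t‖ ≤ ‖σ s - σ t‖) :
    ∃ σ' : ℝ → EuclideanSpace ℝ (Fin 2),
      (∀ t ∈ Icc (0:ℝ) ℓ, HasDerivWithinAt σ (σ' t) (Icc 0 ℓ) t) ∧
      ∃ K : NNReal, LipschitzOnWith K σ' (Icc 0 ℓ) := by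
  set C : ℝ := (L:ℝ)^2/6 with hCdef
  have hC : 0 ≤ C := by positivity
  set B : ℝ := Real.sqrt (2*C) with hBdef
  have hB : 0 ≤ B := Real.sqrt_nonneg _
  -- upper chord bound
  have Hup : ∀ s t : ℝ, 0 ≤ s → s ≤ t → t ≤ ℓ → ‖σ t - σ s‖ ≤ t - s := by
    intro s t hs hst htl
    have := hσlip.dist_le_mul t ⟨le_trans hs hst, htl⟩ s ⟨hs, le_trans hst htl⟩
    rw [dist_eq_norm, Real.dist_eq, abs_of_nonneg (by linarith : (0:ℝ) ≤ t - s)] at this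
    simpa using this
  -- lower chord bound
  have Hlow : ∀ s t : ℝ, 0 ≤ s → s ≤ t → t ≤ ℓ → (t-s) - C*(t-s)^3 ≤ ‖σ t - σ s‖ := by
    intro s t hs hst htl
    calc (t-s) - C*(t-s)^3 ≤ ‖γ t - γ s‖ := chord_low hd hu hlip s t hs hst htl
      _ ≤ ‖σ t - σ s‖ := hmaj t ⟨le_trans hs hst, htl⟩ s ⟨hs, le_trans hst htl⟩
  -- reversed curve bounds
  set τ : ℝ → EuclideanSpace ℝ (Fin 2) := fun x => σ (ℓ - x) with hτ
  have Hupτ : ∀ s t : ℝ, 0 ≤ s → s ≤ t → t ≤ ℓ → ‖τ t - τ s‖ ≤ t - s := by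
    intro s t hs hst htl
    rw [hτ]
    simp only
    rw [norm_sub_rev]
    have := Hup (ℓ - t) (ℓ - s) (by linarith) (by linarith) (by linarith)
    calc ‖σ (ℓ - s) - σ (ℓ - t)‖ ≤ (ℓ - s) - (ℓ - t) := this
      _ = t - s := by ring
  have Hlowτ : ∀ s t : ℝ, 0 ≤ s → s ≤ t → t ≤ ℓ → (t-s) - C*(t-s)^3 ≤ ‖τ t - τ s‖ := by
    intro s t hs hst htl
    rw [hτ]
    simp only
    rw [norm_sub_rev]
    have := Hlow (ℓ - t) (ℓ - s) (by linarith) (by linarith) (by linarith)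
    calc (t-s) - C*(t-s)^3 = ((ℓ-s) - (ℓ-t)) - C*((ℓ-s)-(ℓ-t))^3 := by ring_nf
      _ ≤ ‖σ (ℓ - s) - σ (ℓ - t)‖ := this
  obtain ⟨gp, hgp⟩ := forward_deriv σ ℓ C hC Hlow Hup
  obtain ⟨gm, hgm⟩ := forward_deriv τ ℓ C hC Hlowτ Hupτ
  -- backward quotient estimate
  have hgm' : ∀ t h : ℝ, 0 < h → h ≤ t → t ≤ ℓ →
      ‖h⁻¹ • (σ (t - h) - σ t) - gm (ℓ - t)‖ ≤ 2 * B * h := by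
    intro t h h0 hht htl
    have := hgm (ℓ - t) h (by linarith) h0 (by linarith)
    rw [hτ] at this
    simp only at this
    rw [show ℓ - (ℓ - t + h) = t - h by ring, show ℓ - (ℓ - t) = t by ring] at this
    exact this
  -- gap estimate
  have hgap : ∀ t h : ℝ, 0 < h → h ≤ t → t + h ≤ ℓ →
      ‖h⁻¹ • (σ t - σ (t-h)) - h⁻¹ • (σ (t+h) - σ t)‖ ≤ Real.sqrt (32*C) * h := by
    intro t h h0 hht htl
    have ha : ‖σ t - σ (t-h)‖ ≤ h := by
      have := Hup (t-h) t (by linarith) (by linarith) (by linarith)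
      calc ‖σ t - σ (t-h)‖ ≤ t - (t-h) := this
        _ = h := by ring
    have hb : ‖σ (t+h) - σ t‖ ≤ h := by
      have := Hup t (t+h) (by linarith) (by linarith) htl
      calc ‖σ (t+h) - σ t‖ ≤ (t+h) - t := this
        _ = h := by ring
    have hab : h + h - 8*C*h^3 ≤ ‖(σ t - σ (t-h)) + (σ (t+h) - σ t)‖ := by
      have := Hlow (t-h) (t+h) (by linarith) (by linarith) htl
      have e1 : (σ t - σ (t-h)) + (σ (t+h) - σ t) = σ (t+h) - σ (t-h) := by abel
      rw [e1]
      calc h + h - 8*C*h^3 = ((t+h)-(t-h)) - C*((t+h)-(t-h))^3 := by ring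
        _ ≤ _ := this
    have hq := quot_close h0 h0 (by positivity : (0:ℝ) ≤ 8*C*h^3) ha hb hab
    have : ‖h⁻¹ • (σ t - σ (t-h)) - h⁻¹ • (σ (t+h) - σ t)‖^2 ≤ 32*C*h^2 := by
      calc _ ≤ 2*(h+h)*(8*C*h^3)/(h*h) := hq
        _ = 32*C*h^2 := by field_simp; ring
    calc ‖h⁻¹ • (σ t - σ (t-h)) - h⁻¹ • (σ (t+h) - σ t)‖
        ≤ Real.sqrt (32*C*h^2) := by
          exact (Real.le_sqrt (norm_nonneg _) (by positivity)).mpr this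
      _ = Real.sqrt (32*C) * h := by
          rw [show (32:ℝ)*C*h^2 = (32*C)*h^2 by ring, Real.sqrt_mul (by positivity),
            Real.sqrt_sq h0.le]
  -- gluing
  have hglue : ∀ t : ℝ, 0 < t → t < ℓ → gp t = - gm (ℓ - t) := by
    intro t ht0 htl
    set δ : ℝ := min t (ℓ - t) with hδ
    have hδ0 : 0 < δ := lt_min ht0 (by linarith)
    have key : ∀ h : ℝ, 0 < h → h ≤ δ →
        ‖gp t + gm (ℓ - t)‖ ≤ (4*B + Real.sqrt (32*C)) * h := by
      intro h h0 hhδ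
      have hht : h ≤ t := le_trans hhδ (min_le_left _ _)
      have hhl : t + h ≤ ℓ := by have := le_trans hhδ (min_le_right _ _); linarith
      have e1 := hgp t h (by linarith) h0 hhl
      have e2 := hgm' t h h0 hht (by linarith)
      have e3 := hgap t h h0 hht hhl
      have hid : gp t + gm (ℓ - t)
          = -(h⁻¹ • (σ (t+h) - σ t) - gp t)
            + (h⁻¹ • (σ (t+h) - σ t) - h⁻¹ • (σ t - σ (t-h)))
            + -(h⁻¹ • (σ (t-h) - σ t) - gm (ℓ - t)) := by
        have : h⁻¹ • (σ (t-h) - σ t) = -(h⁻¹ • (σ t - σ (t-h))) := by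
          rw [← smul_neg]; congr 1; abel
        rw [this]; abel
      have n1 : ‖-(h⁻¹ • (σ (t+h) - σ t) - gp t)‖ ≤ 2*B*h := by
        rw [norm_neg]; exact e1
      have n2 : ‖h⁻¹ • (σ (t+h) - σ t) - h⁻¹ • (σ t - σ (t-h))‖ ≤ Real.sqrt (32*C) * h := by
        rw [norm_sub_rev]; exact e3
      have n3 : ‖-(h⁻¹ • (σ (t-h) - σ t) - gm (ℓ - t))‖ ≤ 2*B*h := by
        rw [norm_neg]; exact e2
      rw [hid]
      calc _ ≤ ‖-(h⁻¹ • (σ (t+h) - σ t) - gp t)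
            + (h⁻¹ • (σ (t+h) - σ t) - h⁻¹ • (σ t - σ (t-h)))‖
            + ‖-(h⁻¹ • (σ (t-h) - σ t) - gm (ℓ - t))‖ := norm_add_le _ _
        _ ≤ (‖-(h⁻¹ • (σ (t+h) - σ t) - gp t)‖
            + ‖h⁻¹ • (σ (t+h) - σ t) - h⁻¹ • (σ t - σ (t-h))‖)
            + ‖-(h⁻¹ • (σ (t-h) - σ t) - gm (ℓ - t))‖ := by
              gcongr; exact norm_add_le _ _
        _ ≤ (2*B*h + Real.sqrt (32*C) * h) + 2*B*h := add_le_add (add_le_add n1 n2) n3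
        _ = (4*B + Real.sqrt (32*C)) * h := by ring
    have hz : ‖gp t + gm (ℓ - t)‖ ≤ 0 := by
      have hseq : ∀ k : ℕ, ‖gp t + gm (ℓ - t)‖ ≤ ((4*B + Real.sqrt (32*C)) * δ) * (1/((k:ℝ)+1)) := by
        intro k
        have hk1 : (0:ℝ) < 1/((k:ℝ)+1) := by positivity
        have := key (δ * (1/((k:ℝ)+1))) (by positivity)
          (by
            rw [mul_one_div]
            apply div_le_self hδ0.le
            linarith [Nat.cast_nonneg (α := ℝ) k])
        calc ‖gp t + gm (ℓ - t)‖ ≤ (4*B + Real.sqrt (32*C)) * (δ * (1/((k:ℝ)+1))) := this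
          _ = ((4*B + Real.sqrt (32*C)) * δ) * (1/((k:ℝ)+1)) := by ring
      have htend : Tendsto (fun k : ℕ => ((4*B + Real.sqrt (32*C)) * δ) * (1/((k:ℝ)+1)))
          atTop (nhds 0) := by
        have := tendsto_one_div_add_atTop_nhds_zero_nat.const_mul
          ((4*B + Real.sqrt (32*C)) * δ)
        simpa using this
      exact ge_of_tendsto' htend hseq
    have h0' : gp t + gm (ℓ - t) = 0 :=
      norm_eq_zero.mp (le_antisymm hz (norm_nonneg _))
    have := eq_neg_of_add_eq_zero_left h0'
    exact this
  -- the derivative function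
  set σ'f : ℝ → EuclideanSpace ℝ (Fin 2) := fun t => if t < ℓ then gp t else -gm (ℓ - t)
    with hσ'f
  -- master quadratic estimate
  have master : ∀ t ∈ Icc (0:ℝ) ℓ, ∀ s ∈ Icc (0:ℝ) ℓ,
      ‖σ s - σ t - (s - t) • σ'f t‖ ≤ 2*B*(s-t)^2 := by
    intro t ht s hs
    rcases lt_trichotomy s t with hst | hst | hst
    · -- backward
      have ht0 : 0 < t := lt_of_le_of_lt hs.1 hst
      have hval : σ'f t = -gm (ℓ - t) := by
        simp only [hσ'f]
        by_cases hlt : t < ℓ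
        · rw [if_pos hlt]; exact hglue t ht0 hlt
        · rw [if_neg hlt]
      have hne : t - s ≠ 0 := by intro hx; exact absurd (by linarith : s = t) hst.ne
      have e2 := hgm' t (t - s) (by linarith) (by linarith [hs.1]) ht.2
      have hexpr : σ s - σ t - (s - t) • σ'f t
          = (t - s) • ((t-s)⁻¹ • (σ (t - (t - s)) - σ t) - gm (ℓ - t)) := by
        rw [hval, show t - (t - s) = s by ring, smul_sub, smul_inv_smul₀ hne,
          smul_neg, ← neg_smul, neg_sub]
      rw [hexpr, norm_smul, Real.norm_eq_abs, abs_of_pos (by linarith : (0:ℝ) < t - s)]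
      calc (t-s) * ‖(t-s)⁻¹ • (σ (t - (t - s)) - σ t) - gm (ℓ - t)‖
          ≤ (t-s) * (2*B*(t-s)) := by
            apply mul_le_mul_of_nonneg_left _ (by linarith)
            exact e2
        _ = 2*B*(s-t)^2 := by ring
    · subst hst; simp
    · -- forward
      have htl : t < ℓ := lt_of_lt_of_le hst hs.2
      have hval : σ'f t = gp t := by simp only [hσ'f]; rw [if_pos htl]
      have hne : s - t ≠ 0 := by intro hx; exact absurd (by linarith : s = t) hst.ne'
      have e1 := hgp t (s - t) ht.1 (by linarith) (by linarith [hs.2])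
      have hexpr : σ s - σ t - (s - t) • σ'f t
          = (s - t) • ((s-t)⁻¹ • (σ (t + (s - t)) - σ t) - gp t) := by
        rw [hval, show t + (s - t) = s by ring, smul_sub, smul_inv_smul₀ hne]
      rw [hexpr, norm_smul, Real.norm_eq_abs, abs_of_pos (by linarith : (0:ℝ) < s - t)]
      calc (s-t) * ‖(s-t)⁻¹ • (σ (t + (s - t)) - σ t) - gp t‖
          ≤ (s-t) * (2*B*(s-t)) := by
            apply mul_le_mul_of_nonneg_left _ (by linarith)
            exact e1
        _ = 2*B*(s-t)^2 := by ring
  refine ⟨σ'f, ?_, ?_⟩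
  · -- differentiability
    intro t ht
    rw [hasDerivWithinAt_iff_isLittleO]
    rw [Asymptotics.isLittleO_iff]
    intro c hc
    have hev : ∀ᶠ x' in nhdsWithin t (Icc (0:ℝ) ℓ), |x' - t| ≤ c/(2*B+1) ∧ x' ∈ Icc (0:ℝ) ℓ := by
      apply Filter.Eventually.and
      · apply eventually_nhdsWithin_of_eventually_nhds
        have : Metric.ball t (c/(2*B+1)) ∈ nhds t := Metric.ball_mem_nhds t (by positivity)
        filter_upwards [this] with x hx
        rw [Metric.mem_ball, Real.dist_eq] at hx
        exact hx.le
      · exact eventually_mem_nhdsWithin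
    filter_upwards [hev] with x ⟨hx1, hx2⟩
    calc ‖σ x - σ t - (x - t) • σ'f t‖ ≤ 2*B*(x-t)^2 := master t ht x hx2
      _ = (2*B* |x-t|) * |x - t| := by
          rw [show (2:ℝ)*B*(x-t)^2 = 2*B*((x-t)*(x-t)) by ring, ← abs_mul_abs_self]
          ring
      _ ≤ c * ‖x - t‖ := by
          rw [Real.norm_eq_abs]
          apply mul_le_mul_of_nonneg_right _ (abs_nonneg _)
          calc 2*B* |x-t| ≤ 2*B*(c/(2*B+1)) := by
                apply mul_le_mul_of_nonneg_left hx1 (by positivity)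
            _ ≤ c := by
                rw [div_eq_mul_inv]
                rw [show 2*B*(c*(2*B+1)⁻¹) = c * ((2*B)*(2*B+1)⁻¹) by ring]
                nth_rewrite 2 [← mul_one c]
                apply mul_le_mul_of_nonneg_left _ hc.le
                rw [← div_eq_mul_inv, div_le_one (by positivity)]
                linarith
  · -- Lipschitz
    refine ⟨Real.toNNReal (4*B), LipschitzOnWith.of_dist_le_mul ?_⟩
    intro s hs t ht
    rcases eq_or_ne s t with rfl | hne
    · simp
    · have h1 := master t ht s hs
      have h2 := master s hs t ht
      have hkey : ‖(s - t) • (σ'f s - σ'f t)‖ ≤ 4*B*(s-t)^2 := by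
        have hid : (s - t) • (σ'f s - σ'f t)
            = (σ s - σ t - (s - t) • σ'f t) + (σ t - σ s - (t - s) • σ'f s) := by
          rw [smul_sub, show (t - s) • σ'f s = -((s-t) • σ'f s) by rw [← neg_smul, neg_sub]]
          abel
        rw [hid]
        calc _ ≤ ‖σ s - σ t - (s - t) • σ'f t‖ + ‖σ t - σ s - (t - s) • σ'f s‖ :=
              norm_add_le _ _
          _ ≤ 2*B*(s-t)^2 + 2*B*(t-s)^2 := add_le_add h1 h2
          _ = 4*B*(s-t)^2 := by ring
      rw [norm_smul, Real.norm_eq_abs] at hkey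
      have habs : (0:ℝ) < |s - t| := abs_pos.mpr (sub_ne_zero.mpr hne)
      have hfin : ‖σ'f s - σ'f t‖ ≤ 4*B* |s-t| := by
        have h2 : (s-t)^2 = |s-t| * |s-t| := by rw [pow_two]; exact (abs_mul_abs_self _).symm
        rw [h2] at hkey
        by_contra hcon
        push_neg at hcon
        have := mul_lt_mul_of_pos_left hcon habs
        nlinarith
      calc dist (σ'f s) (σ'f t) = ‖σ'f s - σ'f t‖ := dist_eq_norm _ _
        _ ≤ 4*B* |s-t| := hfin
        _ = (Real.toNNReal (4*B) : ℝ) * dist s t := by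
            rw [Real.coe_toNNReal _ (by positivity), Real.dist_eq]
end

section
/- Let ℓ > 0, let γ : [0,ℓ] → ℝⁿ be a C¹ unit-speed curve whose derivative γ′ is L-Lipschitz, and let γ̃ : [0,ℓ] → ℝ² be a chord-convex C¹ unit-speed curve whose derivative γ̃′ is Lipschitz and which majorizes γ. Then at every t ∈ (0,ℓ) at which both γ′ and γ̃′ are differentiable (hence at almost every t), the geodesic curvatures satisfy ‖γ̃″(t)‖ ≤ ‖γ″(t)‖. (Curvature-comparison part of the paper's Lemma 4.6, Euclidean case.) -/
open Set MeasureTheory intervalIntegral RealInnerProductSpace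

lemma chord_sq_key
    {E : Type*} [NormedAddCommGroup E] [InnerProductSpace ℝ E] [CompleteSpace E]
    (ℓ t : ℝ) (ht : t ∈ Ioo 0 ℓ)
    (f f' : ℝ → E) (f'' : E)
    (hd : ∀ u ∈ Icc (0:ℝ) ℓ, HasDerivWithinAt f (f' u) (Icc 0 ℓ) u)
    (hu : ∀ u ∈ Icc (0:ℝ) ℓ, ‖f' u‖ = 1)
    (hc : ContinuousOn f' (Icc 0 ℓ))
    (hf'' : HasDerivWithinAt f' f'' (Icc 0 ℓ) t)
    (ε : ℝ) (hε : 0 < ε) (hε1 : ε ≤ 1) :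
    ∃ r > 0, t + r < ℓ ∧ ∀ h : ℝ, 0 < h → h ≤ r →
      |h^2 - ‖f (t+h) - f t‖^2 - ‖f''‖^2 * h^4 / 12| ≤ (2*‖f''‖+2) * ε * h^4 := by
  -- extract the little-o estimate
  have hlo := (hasDerivWithinAt_iff_isLittleO.mp hf'').def hε
  rw [eventually_nhdsWithin_iff, Metric.eventually_nhds_iff] at hlo
  obtain ⟨δ, hδ, hδp⟩ := hlo
  refine ⟨min (δ/2) ((ℓ - t)/2), lt_min (by linarith) (by linarith [ht.1, ht.2]), ?_, ?_⟩
  · have : (ℓ - t)/2 < ℓ - t := by linarith [ht.2]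
    have := min_le_right (δ/2) ((ℓ - t)/2)
    linarith
  intro h hh hhr
  have hhδ : h < δ := lt_of_le_of_lt (hhr.trans (min_le_left _ _)) (by linarith)
  have hbℓ : t + h < ℓ := by
    have := hhr.trans (min_le_right _ _); linarith [ht.2]
  set b := t + h with hb
  have htb : t < b := by simp only [hb]; linarith
  have hsub : Icc t b ⊆ Icc 0 ℓ := fun u hu =>
    ⟨le_trans (le_of_lt ht.1) hu.1, le_trans hu.2 (le_of_lt hbℓ)⟩
  have hsubo : Icc t b ⊆ Ioo 0 ℓ := fun u hu =>
    ⟨lt_of_lt_of_le ht.1 hu.1, lt_of_le_of_lt hu.2 hbℓ⟩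
  have huIcc : uIcc t b = Icc t b := uIcc_of_le htb.le
  have hIsub : uIoc t b ⊆ Icc t b := by rw [uIoc_of_le htb.le]; exact Ioc_subset_Icc_self
  -- little-o estimate on [t, b]
  have hest : ∀ u ∈ Icc t b, ‖f' u - f' t - (u - t) • f''‖ ≤ ε * h := by
    intro u hu
    have hut : u - t ≤ h := by linarith [hu.2]
    have h1 : dist u t < δ := by
      rw [Real.dist_eq, abs_of_nonneg (by linarith [hu.1])]; linarith
    calc ‖f' u - f' t - (u - t) • f''‖ ≤ ε * ‖u - t‖ := hδp h1 (hsub hu)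
      _ ≤ ε * h := by
          rw [Real.norm_eq_abs, abs_of_nonneg (by linarith [hu.1])]; nlinarith
  -- fundamental theorem of calculus
  have hda : ∀ u ∈ Icc t b, HasDerivAt f (f' u) u := fun u hu =>
    (hd u (hsub hu)).hasDerivAt (Icc_mem_nhds (hsubo hu).1 (hsubo hu).2)
  have hcsub : ContinuousOn f' (Icc t b) := hc.mono hsub
  have hii : IntervalIntegrable f' volume t b := by
    apply ContinuousOn.intervalIntegrable; rwa [huIcc]
  have hchord : f b - f t = ∫ u in t..b, f' u :=
    (integral_eq_sub_of_hasDerivAt (fun u hu => hda u (huIcc ▸ hu)) hii).symm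
  set c : E := f b - f t with hcdef
  -- Identity A : h² - ‖c‖² = ∫ (h - ⟪f' u, c⟫)
  have hiic : IntervalIntegrable (fun u => ⟪f' u, c⟫) volume t b := by
    apply ContinuousOn.intervalIntegrable
    rw [huIcc]; exact hcsub.inner continuousOn_const
  have hA : (∫ u in t..b, (h - ⟪f' u, c⟫)) = h^2 - ‖c‖^2 := by
    rw [integral_sub intervalIntegrable_const hiic, intervalIntegral.integral_const]
    have h1 : (fun u => ⟪f' u, c⟫) = fun u => (innerSL ℝ c) (f' u) := by
      funext u; exact (real_inner_comm _ _)
    rw [h1, ContinuousLinearMap.intervalIntegral_comp_comm _ hii, ← hchord]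
    simp only [innerSL_apply_apply, real_inner_self_eq_norm_sq, ← hcdef]
    simp only [hb, smul_eq_mul]; ring
  -- Identity B and estimate, for each u in [t, b]
  set C : ℝ := (2*‖f''‖+2) * ε with hC
  have hBest : ∀ u ∈ Icc t b, |(h - ⟪f' u, c⟫) -
      ‖f''‖^2/6 * ((u-t)^3 + (b-u)^3)| ≤ C * h^2 * h := by
    intro u humem
    -- inner identity: h - ⟪f'u, c⟫ = ∫ v, (1 - ⟪f'u, f'v⟫)
    have hiiv : IntervalIntegrable (fun v => ⟪f' u, f' v⟫) volume t b := by
      apply ContinuousOn.intervalIntegrable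
      rw [huIcc]; exact continuousOn_const.inner hcsub
    have hB1 : (∫ v in t..b, (1 - ⟪f' u, f' v⟫)) = h - ⟪f' u, c⟫ := by
      rw [integral_sub intervalIntegrable_const hiiv, intervalIntegral.integral_const]
      have h1 : (fun v => ⟪f' u, f' v⟫) = fun v => (innerSL ℝ (f' u)) (f' v) := by
        funext v; rfl
      rw [h1, ContinuousLinearMap.intervalIntegral_comp_comm _ hii, ← hchord]
      simp only [innerSL_apply_apply, ← hcdef, hb, smul_eq_mul]; ring
    -- quadratic integral
    have hB2 : (∫ v in t..b, ‖f''‖^2/2 * (u-v)^2) =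
        ‖f''‖^2/6 * ((u-t)^3 + (b-u)^3) := by
      rw [intervalIntegral.integral_const_mul]
      have hF : ∀ v ∈ uIcc t b, HasDerivAt (fun v => -(u-v)^3/3) ((u-v)^2) v := by
        intro v _
        have h1 : HasDerivAt (fun v : ℝ => u - v) (-1) v := (hasDerivAt_id v).const_sub u
        have h2 := (h1.pow 3).neg.div_const 3
        exact h2.congr_deriv (by norm_num)
      have hFi : IntervalIntegrable (fun v => (u-v)^2) volume t b :=
        (Continuous.intervalIntegrable ((continuous_const.sub continuous_id).pow 2) _ _)
      rw [integral_eq_sub_of_hasDerivAt hF hFi]; ring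
    have hiq : IntervalIntegrable (fun v => ‖f''‖^2/2 * (u-v)^2) volume t b :=
      (Continuous.intervalIntegrable (continuous_const.mul
        ((continuous_const.sub continuous_id).pow 2)) _ _)
    have hiv1 : IntervalIntegrable (fun v => 1 - ⟪f' u, f' v⟫) volume t b :=
      intervalIntegrable_const.sub hiiv
    rw [← hB1, ← hB2, ← integral_sub hiv1 hiq]
    rw [← Real.norm_eq_abs]
    have key : ∀ v ∈ uIoc t b, ‖(1 - ⟪f' u, f' v⟫) - ‖f''‖^2/2 * (u-v)^2‖ ≤ C * h^2 := by
      intro v hv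
      have hv' : v ∈ Icc t b := hIsub hv
      set A : E := f' u - f' v with hAdef
      set B : E := (u - v) • f'' with hBd
      have hAB : ‖A - B‖ ≤ 2 * (ε * h) := by
        have e1 := hest u humem
        have e2 := hest v hv'
        have : A - B = (f' u - f' t - (u - t) • f'') - (f' v - f' t - (v - t) • f'') := by
          simp only [hAdef, hBd]; module
        rw [this]
        calc ‖_ - _‖ ≤ _ + _ := norm_sub_le _ _
          _ ≤ 2 * (ε * h) := by linarith
      have hBn : ‖B‖ ≤ h * ‖f''‖ := by
        rw [hBd, norm_smul, Real.norm_eq_abs]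
        have h1 : |u - v| ≤ h := by
          rw [abs_le]
          constructor <;> linarith [humem.1, humem.2, hv'.1, hv'.2]
        exact mul_le_mul_of_nonneg_right h1 (norm_nonneg _)
      have hAn : ‖A‖ ≤ h * ‖f''‖ + 2 * (ε * h) := by
        calc ‖A‖ = ‖B + (A - B)‖ := by rw [add_sub_cancel]
          _ ≤ ‖B‖ + ‖A - B‖ := norm_add_le _ _
          _ ≤ _ := by linarith
      -- rewrite integrand as (‖A‖² - ‖B‖²)/2
      have hnu : ‖f' u‖ = 1 := hu u (hsub humem)
      have hnv : ‖f' v‖ = 1 := hu v (hsub hv')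
      have hsq : 1 - ⟪f' u, f' v⟫ = ‖A‖^2/2 := by
        have hns := @norm_sub_sq_real E _ _ (f' u) (f' v)
        rw [hnu, hnv] at hns
        rw [hAdef]; linarith
      have hBsq : ‖f''‖^2/2 * (u-v)^2 = ‖B‖^2/2 := by
        rw [hBd, norm_smul, Real.norm_eq_abs, mul_pow, sq_abs]; ring
      have key1 : |‖A‖^2 - ‖B‖^2| ≤ (‖A‖ + ‖B‖) * ‖A - B‖ := by
        have e1 : ‖A‖^2 - ‖B‖^2 = (‖A‖ + ‖B‖) * (‖A‖ - ‖B‖) := by ring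
        rw [e1, abs_mul, abs_of_nonneg (by positivity)]
        exact mul_le_mul_of_nonneg_left (abs_norm_sub_norm_le A B) (by positivity)
      have key2 : (‖A‖ + ‖B‖) * ‖A - B‖ ≤ 2 * ((2*‖f''‖+2) * ε * h^2) := by
        calc (‖A‖ + ‖B‖) * ‖A - B‖ ≤ (2*(h*‖f''‖) + 2*(ε*h)) * (2*(ε*h)) :=
              mul_le_mul (by linarith) hAB (norm_nonneg _) (by positivity)
          _ ≤ 2 * ((2*‖f''‖+2) * ε * h^2) := by
              nlinarith [mul_nonneg (mul_nonneg hε.le (sq_nonneg h))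
                (by linarith : (0:ℝ) ≤ 1 - ε)]
      rw [hsq, hBsq, Real.norm_eq_abs, hC]
      have k := abs_le.mp key1
      rw [abs_le]
      constructor <;> linarith [k.1, k.2, key2]
    calc ‖∫ v in t..b, ((1 - ⟪f' u, f' v⟫) - ‖f''‖^2/2 * (u-v)^2)‖
        ≤ C * h^2 * |b - t| := norm_integral_le_of_norm_le_const key
      _ = C * h^2 * h := by
          rw [hb]; congr 1
          rw [show t + h - t = h by ring, abs_of_pos hh]
  -- outer integral computation
  have hcg : ContinuousOn (fun u => h - ⟪f' u, c⟫) (Icc t b) :=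
    continuousOn_const.sub (hcsub.inner continuousOn_const)
  have hig : IntervalIntegrable (fun u => h - ⟪f' u, c⟫) volume t b := by
    apply ContinuousOn.intervalIntegrable; rwa [huIcc]
  have hiQ : IntervalIntegrable (fun u => ‖f''‖^2/6 * ((u-t)^3 + (b-u)^3)) volume t b :=
    (Continuous.intervalIntegrable (continuous_const.mul
      (((continuous_id.sub continuous_const).pow 3).add
        ((continuous_const.sub continuous_id).pow 3))) _ _)
  have hQint : (∫ u in t..b, ‖f''‖^2/6 * ((u-t)^3 + (b-u)^3)) = ‖f''‖^2 * h^4 / 12 := by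
    rw [intervalIntegral.integral_const_mul]
    have hF : ∀ u ∈ uIcc t b, HasDerivAt (fun u => ((u-t)^4 - (b-u)^4)/4)
        ((u-t)^3 + (b-u)^3) u := by
      intro u _
      have h1 : HasDerivAt (fun u : ℝ => u - t) 1 u := (hasDerivAt_id u).sub_const t
      have h2 : HasDerivAt (fun u : ℝ => b - u) (-1) u := (hasDerivAt_id u).const_sub b
      have h3 := ((h1.pow 4).sub (h2.pow 4)).div_const 4
      exact h3.congr_deriv (by norm_num; ring)
    have hFi : IntervalIntegrable (fun u => (u-t)^3 + (b-u)^3) volume t b :=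
      (Continuous.intervalIntegrable (((continuous_id.sub continuous_const).pow 3).add
        ((continuous_const.sub continuous_id).pow 3)) _ _)
    rw [integral_eq_sub_of_hasDerivAt hF hFi]
    simp only [hb]; ring
  have hmain : h^2 - ‖c‖^2 - ‖f''‖^2 * h^4/12
      = ∫ u in t..b, ((h - ⟪f' u, c⟫) - ‖f''‖^2/6 * ((u-t)^3 + (b-u)^3)) := by
    rw [integral_sub hig hiQ, hA, hQint]
  rw [hmain, ← Real.norm_eq_abs]
  calc ‖∫ u in t..b, ((h - ⟪f' u, c⟫) - ‖f''‖^2/6 * ((u-t)^3 + (b-u)^3))‖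
      ≤ (C * h^2 * h) * |b - t| := norm_integral_le_of_norm_le_const
        (fun u hu' => by rw [Real.norm_eq_abs]; exact hBest u (hIsub hu'))
    _ = (2*‖f''‖+2) * ε * h^4 := by
        rw [hb, show t + h - t = h by ring, abs_of_pos hh, hC]; ring


/-- **Curvature comparison for chord-convex majorizers (Lemma 4.6, curvature part,
Euclidean case).** If `γ` is a `C¹` unit-speed curve with `L`-Lipschitz derivative,
and `σ` is a chord-convex `C¹` unit-speed planar curve with Lipschitz derivative
which majorizes `γ`, then at every interior point where both second derivatives exist,
the curvature of `σ` is at most that of `γ`. -/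
theorem chordConvex_majorizer_curvature_le
    (n : ℕ) (ℓ : ℝ) (hℓ : 0 < ℓ) (L K : NNReal)
    (γ γ' : ℝ → EuclideanSpace ℝ (Fin n))
    (σ σ' : ℝ → EuclideanSpace ℝ (Fin 2))
    -- `γ` is a `C¹` unit-speed curve with `L`-Lipschitz derivative
    (hd : ∀ t ∈ Icc (0:ℝ) ℓ, HasDerivWithinAt γ (γ' t) (Icc 0 ℓ) t)
    (hu : ∀ t ∈ Icc (0:ℝ) ℓ, ‖γ' t‖ = 1)
    (hc : ContinuousOn γ' (Icc 0 ℓ))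
    (hlip : LipschitzOnWith L γ' (Icc 0 ℓ))
    -- `σ` is a `C¹` unit-speed curve with Lipschitz derivative
    (hσd : ∀ t ∈ Icc (0:ℝ) ℓ, HasDerivWithinAt σ (σ' t) (Icc 0 ℓ) t)
    (hσu : ∀ t ∈ Icc (0:ℝ) ℓ, ‖σ' t‖ = 1)
    (hσc : ContinuousOn σ' (Icc 0 ℓ))
    (hσlip : LipschitzOnWith K σ' (Icc 0 ℓ))
    -- `σ` is chord-convex
    (hinj : InjOn σ (Ico 0 ℓ))
    (hcc : σ '' Icc 0 ℓ ∪ segment ℝ (σ ℓ) (σ 0)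
      = frontier (convexHull ℝ (σ '' Icc 0 ℓ)))
    -- `σ` majorizes `γ`
    (hmaj : ∀ s ∈ Icc (0:ℝ) ℓ, ∀ t ∈ Icc (0:ℝ) ℓ, ‖γ s - γ t‖ ≤ ‖σ s - σ t‖) :
    ∀ t ∈ Ioo (0:ℝ) ℓ,
      ∀ γ'' : EuclideanSpace ℝ (Fin n), ∀ σ'' : EuclideanSpace ℝ (Fin 2),
        HasDerivWithinAt γ' γ'' (Icc 0 ℓ) t →
        HasDerivWithinAt σ' σ'' (Icc 0 ℓ) t →
        ‖σ''‖ ≤ ‖γ''‖ := by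
  intro t ht γ'' σ'' hγ'' hσ''
  suffices hsq : ‖σ''‖^2 ≤ ‖γ''‖^2 by
    nlinarith [norm_nonneg σ'', norm_nonneg γ'']
  -- the ε-quantified comparison
  have main : ∀ ε : ℝ, 0 < ε → ε ≤ 1 →
      ‖σ''‖^2 ≤ ‖γ''‖^2 + 12*((2*‖γ''‖+2)+(2*‖σ''‖+2))*ε := by
    intro ε hε hε1
    obtain ⟨rγ, hrγ, hrγℓ, hγb⟩ :=
      chord_sq_key ℓ t ht γ γ' γ'' hd hu hc hγ'' ε hε hε1
    obtain ⟨rσ, hrσ, hrσℓ, hσb⟩ :=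
      chord_sq_key ℓ t ht σ σ' σ'' hσd hσu hσc hσ'' ε hε hε1
    set h : ℝ := min rγ rσ with hhdef
    have hh : 0 < h := lt_min hrγ hrσ
    have hγe := abs_le.mp (hγb h hh (min_le_left _ _))
    have hσe := abs_le.mp (hσb h hh (min_le_right _ _))
    have hth : t + h ∈ Icc (0:ℝ) ℓ := by
      constructor
      · linarith [ht.1]
      · have : h ≤ rγ := min_le_left _ _
        linarith
    have htI : t ∈ Icc (0:ℝ) ℓ := ⟨ht.1.le, ht.2.le⟩
    have hm := hmaj (t+h) hth t htI
    have hmsq : ‖γ (t+h) - γ t‖^2 ≤ ‖σ (t+h) - σ t‖^2 :=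
      pow_le_pow_left₀ (norm_nonneg _) hm 2
    have h4 : (0:ℝ) < h^4 := by positivity
    have hchain : ‖σ''‖^2 * h^4 ≤
        (‖γ''‖^2 + 12*((2*‖γ''‖+2)+(2*‖σ''‖+2))*ε) * h^4 := by
      nlinarith [hγe.1, hγe.2, hσe.1, hσe.2, hmsq]
    exact le_of_mul_le_mul_right hchain h4
  -- conclude by letting ε → 0
  by_contra hcon
  push_neg at hcon
  set D : ℝ := 12*((2*‖γ''‖+2)+(2*‖σ''‖+2)) with hDdef
  have hD : 0 < D := by positivity
  set ε : ℝ := min 1 ((‖σ''‖^2 - ‖γ''‖^2)/(2*D)) with hεdef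
  have hε : 0 < ε := lt_min one_pos (div_pos (by linarith) (by linarith))
  have hε1 : ε ≤ 1 := min_le_left _ _
  have hb := main ε hε hε1
  have h1 : D * ε ≤ D * ((‖σ''‖^2 - ‖γ''‖^2)/(2*D)) :=
    mul_le_mul_of_nonneg_left (min_le_right _ _) hD.le
  have h2 : D * ((‖σ''‖^2 - ‖γ''‖^2)/(2*D)) = (‖σ''‖^2 - ‖γ''‖^2)/2 := by
    field_simp
  linarith
end

section
/- Let x : [0,ℓ] → ℝ be continuous and let C ≥ 0. Suppose that |x(t+h) − 2x(t) + x(t−h)| ≤ Ch² for every t and every h > 0 with t − h ≥ 0 and t + h ≤ ℓ. Then x is differentiable at every point of (0,ℓ) and its derivative x′ is C-Lipschitz on (0,ℓ). (Second-symmetric-difference lemma proved inside the paper's Lemma 4.6, via convexity of x(t) + Ct²/2 and concavity of x(t) − Ct²/2.) -/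
open Set


lemma my_midpoint_convexOn {a b : ℝ} {g : ℝ → ℝ} (hg : ContinuousOn g (Icc a b))
    (hmid : ∀ s ∈ Icc a b, ∀ t ∈ Icc a b, g ((s + t) / 2) ≤ (g s + g t) / 2) :
    ConvexOn ℝ (Icc a b) g := by
  apply LinearOrder.convexOn_of_lt (convex_Icc a b)
  intro p hp q hq hpq α β hα hβ hαβ
  simp only [smul_eq_mul]
  have hα1 : α = 1 - β := by linarith
  subst hα1
  have hqp : q - p ≠ 0 := by intro h; nlinarith
  set L : ℝ → ℝ := fun u => g p + (g q - g p) / (q - p) * (u - p) with hL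
  set φ : ℝ → ℝ := fun u => g u - L u with hφ
  have hsub : Icc p q ⊆ Icc a b := Icc_subset_Icc hp.1 hq.2
  have hLc : Continuous L := by fun_prop
  have hφc : ContinuousOn φ (Icc p q) := (hg.mono hsub).sub hLc.continuousOn
  have hφp : φ p = 0 := by simp [hφ, hL]
  have hφq : φ q = 0 := by
    simp only [hφ, hL]
    field_simp
    ring
  have hφmid : ∀ s ∈ Icc p q, ∀ t ∈ Icc p q, φ ((s + t) / 2) ≤ (φ s + φ t) / 2 := by
    intro s hs t ht
    have h1 := hmid s (hsub hs) t (hsub ht)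
    have h2 : L ((s + t) / 2) = (L s + L t) / 2 := by simp only [hL]; ring
    simp only [hφ]
    rw [h2]; linarith
  clear_value φ L
  -- max principle: φ ≤ 0 on Icc p q
  have hmain : ∀ u ∈ Icc p q, φ u ≤ 0 := by
    obtain ⟨m, hm, hmax⟩ := isCompact_Icc.exists_isMaxOn ⟨p, left_mem_Icc.mpr hpq.le⟩ hφc
    set M := φ m with hM
    have hMle : ∀ u ∈ Icc p q, φ u ≤ M := hmax
    clear_value M
    by_cases hM0 : M ≤ 0
    · exact fun u hu => (hMle u hu).trans hM0
    push_neg at hM0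
    exfalso
    set S : Set ℝ := Icc p q ∩ φ ⁻¹' {M} with hS
    have hScl : IsClosed S := hφc.preimage_isClosed_of_isClosed isClosed_Icc isClosed_singleton
    have hSne : S.Nonempty := ⟨m, hm, by simp [hM]⟩
    have hSbdd : BddAbove S := (bddAbove_Icc).mono (inter_subset_left)
    have hm' : sSup S ∈ S := hScl.csSup_mem hSne hSbdd
    set m' := sSup S with hm'def
    have hm'pq : m' ∈ Icc p q := hm'.1
    have hφm' : φ m' = M := hm'.2
    have hle_sSup : ∀ u ∈ S, u ≤ m' := fun u hu => le_csSup hSbdd hu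
    clear_value m' S
    have hpm' : p < m' := by
      rcases lt_or_eq_of_le hm'pq.1 with h | h
      · exact h
      · exfalso; rw [← h] at hφm'; rw [hφp] at hφm'; linarith
    have hm'q : m' < q := by
      rcases lt_or_eq_of_le hm'pq.2 with h | h
      · exact h
      · exfalso; rw [h] at hφm'; rw [hφq] at hφm'; linarith
    set h : ℝ := min (m' - p) (q - m') with hh
    have hhpos : 0 < h := lt_min (by linarith) (by linarith)
    have h1 : h ≤ m' - p := min_le_left _ _
    have h2 : h ≤ q - m' := min_le_right _ _
    clear_value h
    have hs0 : m' - h ∈ Icc p q := ⟨by linarith, by linarith⟩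
    have ht0 : m' + h ∈ Icc p q := ⟨by linarith, by linarith⟩
    have key := hφmid (m' - h) hs0 (m' + h) ht0
    have hmid' : (m' - h + (m' + h)) / 2 = m' := by ring
    rw [hmid'] at key
    have hA := hMle (m' - h) hs0
    have hB := hMle (m' + h) ht0
    rw [hφm'] at key
    have hBM : φ (m' + h) = M := le_antisymm hB (by linarith)
    have : m' + h ∈ S := by rw [hS]; exact ⟨ht0, by simp [hBM]⟩
    have := hle_sSup _ this
    linarith
  have hz : (1 - β) * p + β * q ∈ Icc p q :=
    ⟨by nlinarith [mul_pos hβ (sub_pos.mpr hpq)], by nlinarith [mul_pos hα (sub_pos.mpr hpq)]⟩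
  have := hmain _ hz
  have hLz : L ((1 - β) * p + β * q) = (1 - β) * g p + β * g q := by
    simp only [hL]
    have hβ' : (1 - β) * p + β * q - p = β * (q - p) := by ring
    rw [hβ']
    field_simp
    ring
  simp only [hφ] at this
  rw [hLz] at this
  linarith


lemma my_slope_mono4 {s : Set ℝ} {g : ℝ → ℝ} (hg : ConvexOn ℝ s g) {a b c d : ℝ}
    (ha : a ∈ s) (hb : b ∈ s) (hc : c ∈ s) (hd : d ∈ s)
    (hab : a < b) (hcd : c < d) (hac : a ≤ c) (hbd : b ≤ d) :
    slope g a b ≤ slope g c d := by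
  have h1 : slope g a b ≤ slope g a d :=
    hg.slope_mono ha ⟨hb, by simp; exact hab.ne'⟩ ⟨hd, by simp; exact (hab.trans_le hbd).ne'⟩ hbd
  have h2 : slope g d a ≤ slope g d c :=
    hg.slope_mono hd ⟨ha, by simp; exact (hab.trans_le hbd).ne⟩ ⟨hc, by simp; exact hcd.ne⟩ hac
  calc slope g a b ≤ slope g a d := h1
    _ = slope g d a := slope_comm g a d
    _ ≤ slope g d c := h2
    _ = slope g c d := slope_comm g d c

lemma my_slope_quad (x : ℝ → ℝ) (c a b : ℝ) (hab : a ≠ b) :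
    slope (fun t => x t + c * t ^ 2) a b = slope x a b + c * (a + b) := by
  have h : b - a ≠ 0 := sub_ne_zero_of_ne (Ne.symm hab)
  simp only [slope_def_field]
  field_simp
  ring

lemma my_slope_quad' (x : ℝ → ℝ) (c a b : ℝ) (hab : a ≠ b) :
    slope (fun t => -x t + c * t ^ 2) a b = -slope x a b + c * (a + b) := by
  have h : b - a ≠ 0 := sub_ne_zero_of_ne (Ne.symm hab)
  simp only [slope_def_field]
  field_simp
  ring

/-- **Second-symmetric-difference lemma (from the proof of Lemma 4.6).**
If `x : [0, ℓ] → ℝ` is continuous and its second symmetric differences satisfy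
`|x(t+h) − 2x(t) + x(t−h)| ≤ C h²`, then `x` is differentiable on `(0, ℓ)` with
`C`-Lipschitz derivative. -/
theorem second_symmetric_difference_C11
    (ℓ C : ℝ) (hC : 0 ≤ C)
    (x : ℝ → ℝ)
    (hcont : ContinuousOn x (Icc 0 ℓ))
    (hsd : ∀ t : ℝ, ∀ h : ℝ, 0 < h → 0 ≤ t - h → t + h ≤ ℓ →
      |x (t + h) - 2 * x t + x (t - h)| ≤ C * h ^ 2) :
    ∃ x' : ℝ → ℝ,
      (∀ t ∈ Ioo (0:ℝ) ℓ, HasDerivAt x (x' t) t) ∧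
      (∀ s ∈ Ioo (0:ℝ) ℓ, ∀ t ∈ Ioo (0:ℝ) ℓ, |x' s - x' t| ≤ C * |s - t|) := by
  -- the key two-point estimate from the second-difference hypothesis
  have hkey : ∀ s t : ℝ, s ∈ Icc 0 ℓ → t ∈ Icc 0 ℓ → s < t →
      |x t - 2 * x ((s + t) / 2) + x s| ≤ C * ((t - s) / 2) ^ 2 := by
    intro s t hs ht hst
    have e1 : (s + t) / 2 - (t - s) / 2 = s := by ring
    have e2 : (s + t) / 2 + (t - s) / 2 = t := by ring
    have := hsd ((s + t) / 2) ((t - s) / 2) (by linarith)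
      (by rw [e1]; exact hs.1) (by rw [e2]; exact ht.2)
    rw [e1, e2] at this
    exact this
  -- convexity of G = x + (C/2) t²
  have hGmid : ∀ s ∈ Icc (0:ℝ) ℓ, ∀ t ∈ Icc (0:ℝ) ℓ,
      (fun u => x u + C / 2 * u ^ 2) ((s + t) / 2)
        ≤ ((fun u => x u + C / 2 * u ^ 2) s + (fun u => x u + C / 2 * u ^ 2) t) / 2 := by
    have key : ∀ s ∈ Icc (0:ℝ) ℓ, ∀ t ∈ Icc (0:ℝ) ℓ, s < t →
        x ((s + t) / 2) + C / 2 * ((s + t) / 2) ^ 2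
          ≤ (x s + C / 2 * s ^ 2 + (x t + C / 2 * t ^ 2)) / 2 := by
      intro s hs t ht hst
      have h1 := abs_le.mp (hkey s t hs ht hst)
      have h2 := h1.1
      linarith [h2]
    intro s hs t ht
    simp only
    rcases lt_trichotomy s t with h | h | h
    · exact key s hs t ht h
    · subst h
      have : (s + s) / 2 = s := by ring
      rw [this]; linarith
    · have := key t ht s hs h
      have e : (t + s) / 2 = (s + t) / 2 := by ring
      rw [e] at this; linarith
  have hFmid : ∀ s ∈ Icc (0:ℝ) ℓ, ∀ t ∈ Icc (0:ℝ) ℓ,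
      (fun u => -x u + C / 2 * u ^ 2) ((s + t) / 2)
        ≤ ((fun u => -x u + C / 2 * u ^ 2) s + (fun u => -x u + C / 2 * u ^ 2) t) / 2 := by
    have key : ∀ s ∈ Icc (0:ℝ) ℓ, ∀ t ∈ Icc (0:ℝ) ℓ, s < t →
        -x ((s + t) / 2) + C / 2 * ((s + t) / 2) ^ 2
          ≤ (-x s + C / 2 * s ^ 2 + (-x t + C / 2 * t ^ 2)) / 2 := by
      intro s hs t ht hst
      have h1 := abs_le.mp (hkey s t hs ht hst)
      have h2 := h1.2
      linarith [h2]
    intro s hs t ht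
    simp only
    rcases lt_trichotomy s t with h | h | h
    · exact key s hs t ht h
    · subst h
      have : (s + s) / 2 = s := by ring
      rw [this]; linarith
    · have := key t ht s hs h
      have e : (t + s) / 2 = (s + t) / 2 := by ring
      rw [e] at this; linarith
  have hGc : ConvexOn ℝ (Icc 0 ℓ) (fun u => x u + C / 2 * u ^ 2) :=
    my_midpoint_convexOn (hcont.add (by fun_prop)) hGmid
  have hFc : ConvexOn ℝ (Icc 0 ℓ) (fun u => -x u + C / 2 * u ^ 2) :=
    my_midpoint_convexOn (hcont.neg.add (by fun_prop)) hFmid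
  -- the two slope inequalities
  have T1 : ∀ a b c d : ℝ, a ∈ Icc 0 ℓ → b ∈ Icc 0 ℓ → c ∈ Icc 0 ℓ → d ∈ Icc 0 ℓ →
      a < b → c < d → a ≤ c → b ≤ d →
      slope x a b + C / 2 * (a + b) ≤ slope x c d + C / 2 * (c + d) := by
    intro a b c d ha hb hc hd hab hcd hac hbd
    have h := my_slope_mono4 hGc ha hb hc hd hab hcd hac hbd
    rw [my_slope_quad x (C / 2) a b hab.ne, my_slope_quad x (C / 2) c d hcd.ne] at h
    exact h
  have T2 : ∀ a b c d : ℝ, a ∈ Icc 0 ℓ → b ∈ Icc 0 ℓ → c ∈ Icc 0 ℓ → d ∈ Icc 0 ℓ →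
      a < b → c < d → a ≤ c → b ≤ d →
      slope x c d ≤ slope x a b + C / 2 * ((c + d) - (a + b)) := by
    intro a b c d ha hb hc hd hab hcd hac hbd
    have h := my_slope_mono4 hFc ha hb hc hd hab hcd hac hbd
    rw [my_slope_quad' x (C / 2) a b hab.ne, my_slope_quad' x (C / 2) c d hcd.ne] at h
    linarith
  -- membership helpers
  have hδpos : ∀ t ∈ Ioo (0:ℝ) ℓ, 0 < min t (ℓ - t) := by
    intro t ht; exact lt_min ht.1 (by linarith [ht.2])
  have hmemt : ∀ t ∈ Ioo (0:ℝ) ℓ, t ∈ Icc 0 ℓ := fun t ht => ⟨ht.1.le, ht.2.le⟩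
  have hmem1 : ∀ t ∈ Ioo (0:ℝ) ℓ, ∀ h ∈ Ioc 0 (min t (ℓ - t)), t + h ∈ Icc 0 ℓ := by
    intro t ht h hh
    have := hh.2.trans (min_le_right t (ℓ - t))
    exact ⟨by linarith [ht.1, hh.1], by linarith⟩
  have hmem2 : ∀ t ∈ Ioo (0:ℝ) ℓ, ∀ h ∈ Ioc 0 (min t (ℓ - t)), t - h ∈ Icc 0 ℓ := by
    intro t ht h hh
    have := hh.2.trans (min_le_left t (ℓ - t))
    exact ⟨by linarith, by linarith [ht.2, hh.1]⟩
  set x' : ℝ → ℝ := fun t =>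
    sInf ((fun h => slope x t (t + h) + C * h / 2) '' Ioc 0 (min t (ℓ - t))) with hx'def
  have hNe : ∀ t ∈ Ioo (0:ℝ) ℓ,
      ((fun h => slope x t (t + h) + C * h / 2) '' Ioc 0 (min t (ℓ - t))).Nonempty := by
    intro t ht
    exact ⟨_, mem_image_of_mem _ (right_mem_Ioc.mpr (hδpos t ht))⟩
  have hBdd : ∀ t ∈ Ioo (0:ℝ) ℓ,
      BddBelow ((fun h => slope x t (t + h) + C * h / 2) '' Ioc 0 (min t (ℓ - t))) := by
    intro t ht
    refine ⟨slope x (t - min t (ℓ - t)) t - C * (min t (ℓ - t)), ?_⟩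
    rintro _ ⟨h', hh', rfl⟩
    have hδ := hδpos t ht
    have hδmem : min t (ℓ - t) ∈ Ioc 0 (min t (ℓ - t)) := right_mem_Ioc.mpr hδ
    have := T1 (t - min t (ℓ - t)) t t (t + h') (hmem2 t ht _ hδmem) (hmemt t ht)
      (hmemt t ht) (hmem1 t ht h' hh') (by linarith) (by linarith [hh'.1]) (by linarith)
      (by linarith [hh'.1])
    have hCδ : 0 ≤ C * min t (ℓ - t) := mul_nonneg hC hδ.le
    have hCh : 0 ≤ C * h' := mul_nonneg hC hh'.1.le
    simp only
    linarith [hh'.2]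
  have hQ1u : ∀ t ∈ Ioo (0:ℝ) ℓ, ∀ h ∈ Ioc 0 (min t (ℓ - t)),
      x' t ≤ slope x t (t + h) + C * h / 2 := by
    intro t ht h hh
    exact csInf_le (hBdd t ht) (mem_image_of_mem _ hh)
  have hQ1l : ∀ t ∈ Ioo (0:ℝ) ℓ, ∀ h ∈ Ioc 0 (min t (ℓ - t)),
      slope x t (t + h) - C * h ≤ x' t := by
    intro t ht h hh
    apply le_csInf (hNe t ht)
    rintro _ ⟨h', hh', rfl⟩
    simp only
    have hCh : 0 ≤ C * h := mul_nonneg hC hh.1.le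
    have hCh' : 0 ≤ C * h' := mul_nonneg hC hh'.1.le
    rcases le_total h' h with hle | hle
    · have := T2 t (t + h') t (t + h) (hmemt t ht) (hmem1 t ht h' hh') (hmemt t ht)
        (hmem1 t ht h hh) (by linarith [hh'.1]) (by linarith [hh.1]) le_rfl (by linarith)
      linarith
    · have := T1 t (t + h) t (t + h') (hmemt t ht) (hmem1 t ht h hh) (hmemt t ht)
        (hmem1 t ht h' hh') (by linarith [hh.1]) (by linarith [hh'.1]) le_rfl (by linarith)
      linarith
  have hQ2u : ∀ t ∈ Ioo (0:ℝ) ℓ, ∀ h ∈ Ioc 0 (min t (ℓ - t)),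
      x' t ≤ slope x (t - h) t + 3 * C * h / 2 := by
    intro t ht h hh
    have h1 := hQ1u t ht h hh
    have h2 := T2 (t - h) t t (t + h) (hmem2 t ht h hh) (hmemt t ht) (hmemt t ht)
      (hmem1 t ht h hh) (by linarith [hh.1]) (by linarith [hh.1]) (by linarith [hh.1])
      (by linarith [hh.1])
    linarith
  have hQ2l : ∀ t ∈ Ioo (0:ℝ) ℓ, ∀ h ∈ Ioc 0 (min t (ℓ - t)),
      slope x (t - h) t - C * h / 2 ≤ x' t := by
    intro t ht h hh
    apply le_csInf (hNe t ht)
    rintro _ ⟨h', hh', rfl⟩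
    simp only
    have := T1 (t - h) t t (t + h') (hmem2 t ht h hh) (hmemt t ht) (hmemt t ht)
      (hmem1 t ht h' hh') (by linarith [hh.1]) (by linarith [hh'.1]) (by linarith [hh.1])
      (by linarith [hh'.1])
    linarith
  refine ⟨x', ?_, ?_⟩
  · -- differentiability
    intro t ht
    have hδ := hδpos t ht
    rw [hasDerivAt_iff_tendsto_slope]
    have hmemnhds : Ioo (t - min t (ℓ - t)) (t + min t (ℓ - t)) ∈ nhds t :=
      Ioo_mem_nhds (by linarith) (by linarith)
    have hev : ∀ᶠ y in nhdsWithin t {t}ᶜ, |slope x t y - x' t| ≤ 2 * C * |y - t| := by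
      filter_upwards [mem_nhdsWithin_of_mem_nhds hmemnhds, self_mem_nhdsWithin] with y hy hyne
      simp only [mem_compl_iff, mem_singleton_iff] at hyne
      rcases lt_or_gt_of_ne hyne with hlt | hgt
      · -- y < t
        set h := t - y with hhdef
        have hhmem : h ∈ Ioc 0 (min t (ℓ - t)) := ⟨by simp only [hhdef]; linarith,
          by simp only [hhdef]; linarith [hy.1]⟩
        have e : slope x t y = slope x (t - h) t := by
          rw [slope_comm]; congr 1; simp only [hhdef]; ring
        rw [e]
        have h1 := hQ2u t ht h hhmem
        have h2 := hQ2l t ht h hhmem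
        have habs : |y - t| = h := by
          rw [abs_of_neg (by linarith : y - t < 0)]; simp only [hhdef]; ring
        rw [habs, abs_le]
        have hCh : 0 ≤ C * h := mul_nonneg hC hhmem.1.le
        constructor <;> nlinarith
      · -- t < y
        set h := y - t with hhdef
        have hhmem : h ∈ Ioc 0 (min t (ℓ - t)) := ⟨by simp only [hhdef]; linarith,
          by simp only [hhdef]; linarith [hy.2]⟩
        have e : slope x t y = slope x t (t + h) := by congr 1; simp only [hhdef]; ring
        rw [e]
        have h1 := hQ1u t ht h hhmem
        have h2 := hQ1l t ht h hhmem
        have habs : |y - t| = h := by rw [abs_of_pos (by linarith : (0:ℝ) < y - t)]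
        rw [habs, abs_le]
        have hCh : 0 ≤ C * h := mul_nonneg hC hhmem.1.le
        constructor <;> nlinarith
    have htend : Filter.Tendsto (fun y => 2 * C * |y - t|) (nhdsWithin t {t}ᶜ) (nhds 0) := by
      have hc : Continuous fun y : ℝ => 2 * C * |y - t| := by fun_prop
      have h2 : Filter.Tendsto (fun y : ℝ => 2 * C * |y - t|) (nhdsWithin t {t}ᶜ)
          (nhds (2 * C * |t - t|)) :=
        (hc.tendsto t).mono_left nhdsWithin_le_nhds
      simpa using h2
    rw [tendsto_iff_dist_tendsto_zero]
    simp only [Real.dist_eq]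
    exact squeeze_zero' (Filter.Eventually.of_forall fun y => abs_nonneg _) hev htend
  · -- Lipschitz
    have hmono : ∀ s ∈ Ioo (0:ℝ) ℓ, ∀ t ∈ Ioo (0:ℝ) ℓ, s < t → x' s ≤ x' t + C * (t - s) := by
      intro s hs t ht hst
      set h := min (min (min s (ℓ - s)) (min t (ℓ - t))) ((t - s) / 2) with hhdef
      have hh1 : 0 < h := lt_min (lt_min (hδpos s hs) (hδpos t ht)) (by linarith)
      have hhs : h ≤ min s (ℓ - s) := (min_le_left _ _).trans (min_le_left _ _)
      have hht : h ≤ min t (ℓ - t) := (min_le_left _ _).trans (min_le_right _ _)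
      have hhm : h ≤ (t - s) / 2 := min_le_right _ _
      have e1 := hQ1u s hs h ⟨hh1, hhs⟩
      have e3 := hQ2l t ht h ⟨hh1, hht⟩
      have e2 := T1 s (s + h) (t - h) t (hmemt s hs) (hmem1 s hs h ⟨hh1, hhs⟩)
        (hmem2 t ht h ⟨hh1, hht⟩) (hmemt t ht) (by linarith) (by linarith) (by linarith)
        (by linarith)
      linarith
    have hrev : ∀ s ∈ Ioo (0:ℝ) ℓ, ∀ t ∈ Ioo (0:ℝ) ℓ, s < t → x' t ≤ x' s + C * (t - s) := by
      intro s hs t ht hst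
      apply le_of_forall_pos_le_add
      intro ε hε
      have hC1 : (0:ℝ) < C + 1 := by linarith
      set u := ε / (2 * (C + 1)) with hudef
      have hu : 0 < u := by positivity
      have hid : 2 * (C + 1) * u = ε := by rw [hudef]; field_simp
      have hCu : 0 ≤ C * u := mul_nonneg hC hu.le
      set h := min (min (min (min s (ℓ - s)) (min t (ℓ - t))) ((t - s) / 2)) u with hhdef
      have hh1 : 0 < h := lt_min (lt_min (lt_min (hδpos s hs) (hδpos t ht)) (by linarith)) hu
      have hhs : h ≤ min s (ℓ - s) :=
        ((min_le_left _ _).trans (min_le_left _ _)).trans (min_le_left _ _)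
      have hht : h ≤ min t (ℓ - t) :=
        ((min_le_left _ _).trans (min_le_left _ _)).trans (min_le_right _ _)
      have hhm : h ≤ (t - s) / 2 := (min_le_left _ _).trans (min_le_right _ _)
      have hhu : h ≤ u := min_le_right _ _
      have hChu : C * h ≤ C * u := mul_le_mul_of_nonneg_left hhu hC
      have e1 := hQ2u t ht h ⟨hh1, hht⟩
      have e3 := hQ1l s hs h ⟨hh1, hhs⟩
      have e2 := T2 s (s + h) (t - h) t (hmemt s hs) (hmem1 s hs h ⟨hh1, hhs⟩)
        (hmem2 t ht h ⟨hh1, hht⟩) (hmemt t ht) (by linarith) (by linarith) (by linarith)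
        (by linarith)
      linarith
    intro s hs t ht
    rcases lt_trichotomy s t with h | h | h
    · have h1 := hmono s hs t ht h
      have h2 := hrev s hs t ht h
      have habs : |s - t| = t - s := by rw [abs_of_nonpos (by linarith)]; ring
      rw [habs, abs_le]
      constructor <;> linarith
    · subst h; simp
    · have h1 := hmono t ht s hs h
      have h2 := hrev t ht s hs h
      have habs : |s - t| = s - t := abs_of_nonneg (by linarith)
      rw [habs, abs_le]
      constructor <;> linarith
end

section
/- Let θ : [a,b] → ℝ be nondecreasing and continuous, and define c : [a,b] → ℝ² by c(t) = (cos θ(t), sin θ(t)). Then the total variation of c on [a,b] equals θ(b) − θ(a), i.e. eVariationOn c (Set.Icc a b) = θ(b) − θ(a). (The identification, used in the proof of the paper's Proposition 4.2, of the total curvature of a C¹ planar curve with the increase of its turning angle.) -/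
open Set Filter Topology

lemma dist_circle (c : ℝ → EuclideanSpace ℝ (Fin 2)) (θ : ℝ → ℝ)
    (hc : ∀ t, c t = ![Real.cos (θ t), Real.sin (θ t)]) (s t : ℝ) :
    dist (c s) (c t) = 2 * |Real.sin ((θ s - θ t) / 2)| := by
  rw [EuclideanSpace.dist_eq]
  simp only [hc, Fin.sum_univ_two, Matrix.cons_val_zero, Matrix.cons_val_one, Matrix.head_cons,
    Real.dist_eq, sq_abs]
  set x := θ s; set y := θ t
  have h : (Real.cos x - Real.cos y) ^ 2 + (Real.sin x - Real.sin y) ^ 2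
      = (2 * |Real.sin ((x - y) / 2)|) ^ 2 := by
    have h1 : Real.sin ((x - y) / 2) ^ 2 = 1/2 - Real.cos (2 * ((x - y)/2)) / 2 :=
      Real.sin_sq_eq_half_sub _
    have he : 2 * ((x - y)/2) = x - y := by ring
    rw [he] at h1
    have h2 : Real.cos (x - y) = Real.cos x * Real.cos y + Real.sin x * Real.sin y :=
      Real.cos_sub x y
    have hcx := Real.sin_sq_add_cos_sq x
    have hcy := Real.sin_sq_add_cos_sq y
    have h3 := sq_abs (Real.sin ((x - y) / 2))
    nlinarith [h3]
  rw [h, Real.sqrt_sq (by positivity)]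

lemma tendsto_sin_div_self : Tendsto (fun x : ℝ => Real.sin x / x) (𝓝[≠] 0) (𝓝 1) := by
  have h := Real.hasDerivAt_sin 0
  rw [hasDerivAt_iff_tendsto_slope] at h
  simp only [Real.cos_zero] at h
  refine h.congr' ?_
  filter_upwards [self_mem_nhdsWithin] with x hx
  simp [slope_def_field, Real.sin_zero]

/-- **Total variation of the unit tangent equals the increase of the turning angle.**
If `θ : [a, b] → ℝ` is nondecreasing and continuous and `c(t) = (cos θ(t), sin θ(t))`,
then the total variation of `c` on `[a, b]` is `θ(b) − θ(a)`. -/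
theorem eVariationOn_circle_of_monotone
    (a b : ℝ) (hab : a ≤ b)
    (θ : ℝ → ℝ)
    (hmono : MonotoneOn θ (Icc a b))
    (hcont : ContinuousOn θ (Icc a b))
    (c : ℝ → EuclideanSpace ℝ (Fin 2))
    (hc : ∀ t, c t = ![Real.cos (θ t), Real.sin (θ t)]) :
    eVariationOn c (Icc a b) = ENNReal.ofReal (θ b - θ a) := by
  have hd := dist_circle c θ hc
  have hamem : a ∈ Icc a b := left_mem_Icc.2 hab
  have hbmem : b ∈ Icc a b := right_mem_Icc.2 hab
  set L := θ b - θ a with hLdef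
  have hL0 : 0 ≤ L := sub_nonneg.2 (hmono hamem hbmem hab)
  -- Upper bound
  have hupper : eVariationOn c (Icc a b) ≤ ENNReal.ofReal L := by
    apply iSup_le
    rintro ⟨n, ⟨u, hu, us⟩⟩
    calc (∑ i ∈ Finset.range n, edist (c (u (i + 1))) (c (u i)))
        ≤ ∑ i ∈ Finset.range n, ENNReal.ofReal (θ (u (i + 1)) - θ (u i)) := by
          refine Finset.sum_le_sum fun i _ => ?_
          rw [edist_dist, hd]
          apply ENNReal.ofReal_le_ofReal
          have hmon : θ (u i) ≤ θ (u (i + 1)) := hmono (us i) (us (i + 1)) (hu (Nat.le_succ _))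
          have := Real.abs_sin_le_abs (x := (θ (u (i + 1)) - θ (u i)) / 2)
          rw [abs_div, abs_of_nonneg (by linarith : (0:ℝ) ≤ θ (u (i+1)) - θ (u i))] at this
          have h2 : |(2:ℝ)| = 2 := by norm_num
          rw [h2] at this
          linarith
      _ = ENNReal.ofReal (∑ i ∈ Finset.range n, (θ (u (i + 1)) - θ (u i))) := by
          rw [ENNReal.ofReal_sum_of_nonneg]
          intro i _
          exact sub_nonneg.2 (hmono (us i) (us (i + 1)) (hu (Nat.le_succ _)))
      _ = ENNReal.ofReal (θ (u n) - θ (u 0)) := by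
          rw [Finset.sum_range_sub (fun i => θ (u i))]
      _ ≤ ENNReal.ofReal L := by
          apply ENNReal.ofReal_le_ofReal
          have h1 : θ (u n) ≤ θ b := hmono (us n) hbmem (us n).2
          have h2 : θ a ≤ θ (u 0) := hmono hamem (us 0) (us 0).1
          simp only [hLdef]; linarith
  -- Lower bound
  rcases eq_or_lt_of_le hL0 with hL | hLpos
  · -- L = 0 : c is constant on [a,b]
    rw [← hL, ENNReal.ofReal_zero]
    rw [eVariationOn.eq_zero_iff]
    intro x hx y hy
    have hxy : θ x = θ y := by
      have h1 := hmono hamem hx hx.1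
      have h2 := hmono hx hbmem hx.2
      have h3 := hmono hamem hy hy.1
      have h4 := hmono hy hbmem hy.2
      simp only [hLdef] at hL; linarith
    rw [edist_eq_zero]; apply WithLp.ofLp_injective; rw [hc x, hc y, hxy]
  · apply le_antisymm hupper
    have key : ∀ n : ℕ, ⌈L⌉₊ + 1 ≤ n →
        ENNReal.ofReal (2 * n * Real.sin (L / (2 * n))) ≤ eVariationOn c (Icc a b) := by
      intro n hn
      have hn1 : 1 ≤ n := le_trans (Nat.le_add_left 1 _) hn
      have hn0 : 0 < (n : ℝ) := by exact_mod_cast hn1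
      set δ := L / n with hδdef
      have hδ0 : 0 < δ := div_pos hLpos hn0
      have hnδ : (n : ℝ) * δ = L := by rw [hδdef]; field_simp
      -- the step is small
      have hsmall : δ / 2 ≤ 1 := by
        have h1 : L < (⌈L⌉₊ : ℝ) + 1 := lt_of_le_of_lt (Nat.le_ceil L) (by norm_num)
        have h2 : ((⌈L⌉₊ : ℝ) + 1) ≤ (n : ℝ) := by exact_mod_cast hn
        have : L / n ≤ 1 := by
          rw [div_le_one hn0]; linarith
        linarith
      have hsin_nonneg : 0 ≤ Real.sin (δ / 2) :=
        Real.sin_nonneg_of_nonneg_of_le_pi (by positivity)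
          (le_trans hsmall (by linarith [Real.pi_gt_three]))
      -- construct the partition via the intermediate value theorem
      have himage : Icc (θ a) (θ b) ⊆ θ '' Icc a b := intermediate_value_Icc hab hcont
      have hex : ∀ k : ℕ, ∃ x, x ∈ Icc a b ∧ θ x = θ a + (min k n : ℕ) * δ := by
        intro k
        have hk : ((min k n : ℕ) : ℝ) * δ ≤ L := by
          rw [← hnδ]
          apply mul_le_mul_of_nonneg_right _ hδ0.le
          exact_mod_cast Nat.min_le_right k n
        have : θ a + (min k n : ℕ) * δ ∈ Icc (θ a) (θ b) := by
          constructor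
          · have : (0:ℝ) ≤ (min k n : ℕ) * δ := by positivity
            linarith
          · simp only [hLdef] at hk; linarith
        obtain ⟨x, hx, hθx⟩ := himage this
        exact ⟨x, hx, hθx⟩
      choose t ht hθt using hex
      set u : ℕ → ℝ := fun i => t (min i n) with hudef
      have humem : ∀ i, u i ∈ Icc a b := fun i => ht _
      have hθu : ∀ i, θ (u i) = θ a + (min i n : ℕ) * δ := by
        intro i
        have h := hθt (min i n)
        rwa [Nat.min_assoc, Nat.min_self] at h
      have humono : Monotone u := by
        intro i j hij
        have hmin : min i n ≤ min j n := min_le_min_right n hij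
        rcases eq_or_lt_of_le hmin with heq | hlt
        · simp only [hudef, heq]; exact le_refl _
        · have hθlt : θ (u i) < θ (u j) := by
            rw [hθu i, hθu j]
            have : ((min i n : ℕ) : ℝ) < ((min j n : ℕ) : ℝ) := by exact_mod_cast hlt
            nlinarith
          by_contra hcon
          push_neg at hcon
          exact absurd (hmono (humem j) (humem i) hcon.le) (not_le.2 hθlt)
      have hsum := eVariationOn.sum_le (f := c) (n := n) humono humem
      refine le_trans (le_of_eq ?_) hsum
      have hterm : ∀ i ∈ Finset.range n,
          edist (c (u (i + 1))) (c (u i)) = ENNReal.ofReal (2 * Real.sin (δ / 2)) := by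
        intro i hi
        rw [Finset.mem_range] at hi
        rw [edist_dist, hd]
        congr 1
        have h1 : θ (u (i + 1)) - θ (u i) = δ := by
          rw [hθu, hθu, Nat.min_eq_left hi.le, Nat.min_eq_left hi]
          push_cast; ring
        rw [h1, abs_of_nonneg hsin_nonneg]
      rw [Finset.sum_congr rfl hterm, Finset.sum_const, Finset.card_range, nsmul_eq_mul,
        ← ENNReal.ofReal_natCast n, ← ENNReal.ofReal_mul (by positivity)]
      congr 1
      have : L / (2 * n) = δ / 2 := by rw [hδdef]; ring
      rw [this]; ring
    -- take the limit
    have hx : Tendsto (fun n : ℕ => L / (2 * n)) atTop (𝓝[≠] 0) := by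
      rw [tendsto_nhdsWithin_iff]
      constructor
      · have : (fun n : ℕ => L / (2 * n)) = fun n : ℕ => (L / 2) / n := by
          funext n; rw [div_div]
        rw [this]
        exact tendsto_const_div_atTop_nhds_zero_nat (L / 2)
      · filter_upwards [eventually_ge_atTop 1] with n hn
        have hn0 : 0 < (n : ℝ) := by exact_mod_cast hn
        have : 0 < L / (2 * n) := by positivity
        exact this.ne'
    have hlim : Tendsto (fun n : ℕ => 2 * (n : ℝ) * Real.sin (L / (2 * n))) atTop (𝓝 L) := by
      have h1 := tendsto_sin_div_self.comp hx
      have h2 : Tendsto (fun n : ℕ => L * (Real.sin (L / (2 * n)) / (L / (2 * n)))) atTop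
          (𝓝 (L * 1)) := h1.const_mul L
      rw [mul_one] at h2
      refine h2.congr' ?_
      filter_upwards [eventually_ge_atTop 1] with n hn
      have hn0 : 0 < (n : ℝ) := by exact_mod_cast hn
      have hx0 : L / (2 * n) ≠ 0 := by positivity
      field_simp
    have hof : Tendsto (fun n : ℕ => ENNReal.ofReal (2 * (n : ℝ) * Real.sin (L / (2 * n))))
        atTop (𝓝 (ENNReal.ofReal L)) := ENNReal.tendsto_ofReal hlim
    exact le_of_tendsto hof (eventually_atTop.2 ⟨⌈L⌉₊ + 1, key⟩)
end

section
/- Let Ω ⊆ ℝᵐ be open, let f : Ω → ℝ be Lipschitz on Ω, let x₀ ∈ Ω, and let L : ℝᵐ → ℝ be a continuous linear map. Suppose that the tangent cone of the graph of f (over Ω) at (x₀, f(x₀)) is contained in the graph of L, i.e. tangentConeAt ℝ {p : ℝᵐ × ℝ | p.1 ∈ Ω ∧ p.2 = f(p.1)} (x₀, f(x₀)) ⊆ {(v, L v) | v ∈ ℝᵐ}. Then f is differentiable at x₀ with derivative L (HasFDerivAt f L x₀). (The claim, used in the proof of the paper's Lemma 2.3, that a locally Lipschitz function whose graph has a non-vertical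 flat tangent cone is differentiable there.) -/
open Set Filter Metric

/-- **Differentiability from a flat non-vertical tangent cone (from the proof of
Lemma 2.3).** If `f` is Lipschitz on an open set `Ω`, `x₀ ∈ Ω`, and the tangent cone of
the graph of `f` over `Ω` at `(x₀, f x₀)` is contained in the graph of a continuous
linear map `L`, then `f` is differentiable at `x₀` with derivative `L`. -/
theorem hasFDerivAt_of_tangentCone_subset_graph
    (m : ℕ)
    (Ω : Set (EuclideanSpace ℝ (Fin m))) (hΩ : IsOpen Ω)
    (f : EuclideanSpace ℝ (Fin m) → ℝ)
    (K : NNReal) (hf : LipschitzOnWith K f Ω)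
    (x₀ : EuclideanSpace ℝ (Fin m)) (hx₀ : x₀ ∈ Ω)
    (L : EuclideanSpace ℝ (Fin m) →L[ℝ] ℝ)
    (hcone : tangentConeAt ℝ {p : EuclideanSpace ℝ (Fin m) × ℝ | p.1 ∈ Ω ∧ p.2 = f p.1}
        (x₀, f x₀)
      ⊆ {q : EuclideanSpace ℝ (Fin m) × ℝ | q.2 = L q.1}) :
    HasFDerivAt f L x₀ := by
  rw [hasFDerivAt_iff_tendsto]
  by_contra hcontra
  -- extract ε and a sequence
  rw [Metric.tendsto_nhds_nhds] at hcontra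
  push_neg at hcontra
  obtain ⟨ε, hε, hεall⟩ := hcontra
  obtain ⟨r, hr, hrΩ⟩ := Metric.isOpen_iff.mp hΩ x₀ hx₀
  -- for each n pick xₙ with dist < r/(n+1) and ratio ≥ ε
  have hseq : ∀ n : ℕ, ∃ x, dist x x₀ < r / (n + 1) ∧
      ε ≤ dist (‖x - x₀‖⁻¹ * ‖f x - f x₀ - L (x - x₀)‖) 0 := by
    intro n
    obtain ⟨x, hx1, hx2⟩ := hεall (r / (n + 1)) (by positivity)
    exact ⟨x, hx1, hx2⟩
  choose x hx1 hx2 using hseq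
  have hxΩ : ∀ n, x n ∈ Ω := fun n => hrΩ <| by
    have : (r : ℝ) / (n + 1) ≤ r := by
      rw [div_le_iff₀ (by positivity)]
      nlinarith
    exact mem_ball.mpr (lt_of_lt_of_le (hx1 n) this)
  have hxne : ∀ n, x n ≠ x₀ := by
    intro n hn
    have := hx2 n
    rw [hn] at this
    simp at this
    linarith
  have hnormpos : ∀ n, 0 < ‖x n - x₀‖ := fun n =>
    norm_pos_iff.mpr (sub_ne_zero.mpr (hxne n))
  have hxlim : Filter.Tendsto x atTop (nhds x₀) := by
    rw [tendsto_iff_dist_tendsto_zero]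
    apply squeeze_zero (fun n => dist_nonneg) (fun n => (hx1 n).le)
    have h0 := tendsto_one_div_add_atTop_nhds_zero_nat.const_mul r
    rw [mul_zero] at h0
    refine h0.congr fun n => ?_
    rw [mul_one_div]
  -- tangent cone data
  set c : ℕ → ℝ := fun n => ‖x n - x₀‖⁻¹ with hc
  set d : ℕ → EuclideanSpace ℝ (Fin m) × ℝ := fun n => (x n - x₀, f (x n) - f x₀) with hd
  have hnormlim : Filter.Tendsto (fun n => ‖x n - x₀‖) atTop (nhds 0) := by
    have := hxlim.sub_const x₀
    rw [show x₀ - x₀ = 0 by simp] at this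
    simpa using this.norm
  have hclim : Filter.Tendsto (fun n => ‖c n‖) atTop atTop := by
    have h1 : Filter.Tendsto (fun n => ‖x n - x₀‖) atTop (nhdsWithin 0 (Set.Ioi 0)) :=
      tendsto_nhdsWithin_of_tendsto_nhds_of_eventually_within _ hnormlim
        (Filter.Eventually.of_forall fun n => hnormpos n)
    have := tendsto_inv_nhdsGT_zero.comp h1
    refine this.congr fun n => ?_
    simp [hc, abs_of_pos (inv_pos.mpr (hnormpos n))]
  -- the rescaled sequence is bounded
  set p : ℕ → EuclideanSpace ℝ (Fin m) × ℝ := fun n => c n • d n with hp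
  have hpbound : ∀ n, p n ∈ Metric.closedBall (0 : EuclideanSpace ℝ (Fin m) × ℝ) (1 + K) := by
    intro n
    rw [Metric.mem_closedBall, dist_zero_right]
    have h1 : ‖c n • (x n - x₀)‖ ≤ 1 := by
      rw [norm_smul, hc]
      simp only [norm_inv, norm_norm]
      rw [inv_mul_le_iff₀ (hnormpos n)]
      simp
    have h2 : ‖c n • (f (x n) - f x₀)‖ ≤ K := by
      rw [norm_smul, hc]
      simp only [norm_inv, norm_norm]
      rw [inv_mul_le_iff₀ (hnormpos n)]
      have := hf.norm_sub_le (hxΩ n) hx₀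
      simpa [mul_comm] using this
    have : ‖p n‖ = max ‖c n • (x n - x₀)‖ ‖c n • (f (x n) - f x₀)‖ := rfl
    rw [this]
    apply max_le
    · linarith [NNReal.coe_nonneg K]
    · linarith
  obtain ⟨q, -, φ, hφ, hqlim⟩ :=
    tendsto_subseq_of_bounded isBounded_closedBall hpbound
  -- q is in the tangent cone
  have hqcone : q ∈ tangentConeAt ℝ
      {p : EuclideanSpace ℝ (Fin m) × ℝ | p.1 ∈ Ω ∧ p.2 = f p.1} (x₀, f x₀) := by
    refine mem_tangentConeAt_iff_exists_seq_norm_tendsto_atTop.mpr ⟨fun n => c (φ n), fun n => d (φ n), ?_, ?_, ?_⟩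
    swap
    · exact Filter.Eventually.of_forall fun n => ⟨by simpa [hd] using hxΩ (φ n), by simp [hd]⟩
    · exact hclim.comp hφ.tendsto_atTop
    · exact hqlim
  have hq := hcone hqcone
  -- but the limit is ε-far from the graph of L
  have hεq : ε ≤ ‖q.2 - L q.1‖ := by
    have hcomp : Filter.Tendsto (fun n => ‖(p (φ n)).2 - L (p (φ n)).1‖) atTop
        (nhds ‖q.2 - L q.1‖) := by
      have h2 : Filter.Tendsto (fun n => (p (φ n)).2 - L (p (φ n)).1) atTop
          (nhds (q.2 - L q.1)) :=
        ((continuous_snd.sub (L.continuous.comp continuous_fst)).tendsto q).comp hqlim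
      exact h2.norm
    refine le_of_tendsto_of_tendsto' tendsto_const_nhds hcomp fun n => ?_
    have h := hx2 (φ n)
    rw [Real.dist_0_eq_abs] at h
    have hpn : (p (φ n)).2 - L (p (φ n)).1
        = c (φ n) * (f (x (φ n)) - f x₀ - L (x (φ n) - x₀)) := by
      simp only [hp, hd, Prod.smul_mk, Prod.fst, Prod.snd, smul_eq_mul, map_smul]
      ring
    rw [hpn, norm_mul, hc]
    have habs : |‖x (φ n) - x₀‖⁻¹ * ‖f (x (φ n)) - f x₀ - L (x (φ n) - x₀)‖|
        = ‖x (φ n) - x₀‖⁻¹ * ‖f (x (φ n)) - f x₀ - L (x (φ n) - x₀)‖ := by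
      apply abs_of_nonneg; positivity
    rw [habs] at h
    calc ε ≤ ‖x (φ n) - x₀‖⁻¹ * ‖f (x (φ n)) - f x₀ - L (x (φ n) - x₀)‖ := h
    _ = ‖(‖x (φ n) - x₀‖⁻¹ : ℝ)‖ * ‖f (x (φ n)) - f x₀ - L (x (φ n) - x₀)‖ := by
        rw [norm_inv, norm_norm]
  rw [hq] at hεq
  simp at hεq
  linarith
end
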